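/- arXiv:2309.17228 — 5 statements merged into one kernel-verified Lean document; each statement's English description precedes it below -/
import Mathlib

section
/- For a complex number λ with nonzero real part, the integral over ℝ of 1/|t² + λ²|² dt equals π / (2 |λ|² |Re(λ)|). -/
open MeasureTheory Real Filter Topology

/-- Integrability of the product of two shifted Cauchy-type kernels. -/
lemma integrable_aux (A B : ℝ) (hA : 0 < A) :
    Integrable (fun t : ℝ => 1 / (((t - B) ^ 2 + A ^ 2) * ((t + B) ^ 2 + A ^ 2))) := by
  have hD : ∀ t : ℝ, 0 < ((t - B) ^ 2 + A ^ 2) * ((t + B) ^ 2 + A ^ 2) := by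
    intro t; positivity
  have hs : (0:ℝ) < A ^ 2 + B ^ 2 := by positivity
  refine (integrable_inv_one_add_sq.const_mul
      ((1 + (A ^ 2 + B ^ 2)) / (A ^ 2 * (A ^ 2 + B ^ 2)))).mono' ?_ ?_
  · exact (continuous_const.div
      (by continuity) (fun t => (hD t).ne')).aestronglyMeasurable
  · refine Eventually.of_forall fun t => ?_
    rw [Real.norm_of_nonneg (by positivity)]
    have h1t : (0:ℝ) < 1 + t ^ 2 := by positivity
    have hrw : (1 + (A ^ 2 + B ^ 2)) / (A ^ 2 * (A ^ 2 + B ^ 2)) * (1 + t ^ 2)⁻¹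
        = (1 + (A ^ 2 + B ^ 2)) / (A ^ 2 * (A ^ 2 + B ^ 2) * (1 + t ^ 2)) := by
      field_simp
    rw [hrw, div_le_div_iff₀ (hD t) (by positivity)]
    have h2 : A ^ 2 * (t ^ 2 + (A ^ 2 + B ^ 2))
        ≤ ((t - B) ^ 2 + A ^ 2) * ((t + B) ^ 2 + A ^ 2) := by
      nlinarith [sq_nonneg (t ^ 2 - B ^ 2), sq_nonneg A, sq_nonneg t, sq_nonneg B,
        mul_nonneg (sq_nonneg A) (sq_nonneg t), mul_nonneg (sq_nonneg A) (sq_nonneg B),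
        mul_nonneg (sq_nonneg t) (sq_nonneg B)]
    nlinarith [mul_le_mul_of_nonneg_left h2
        (by positivity : (0:ℝ) ≤ 1 + (A ^ 2 + B ^ 2)),
      mul_nonneg (sq_nonneg A) (sq_nonneg t), mul_nonneg (sq_nonneg A)
        (sq_nonneg (A ^ 2 + B ^ 2))]

/-- The log part of the antiderivative tends to zero at infinity. -/
lemma tendsto_log_ratio (A B : ℝ) (hA : 0 < A) (l : Filter ℝ)
    (hne : ∀ᶠ t in l, t ≠ 0) (hinv : Tendsto (fun t : ℝ => t⁻¹) l (𝓝 0)) :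
    Tendsto (fun t : ℝ =>
      Real.log ((t - B) ^ 2 + A ^ 2) - Real.log ((t + B) ^ 2 + A ^ 2)) l (𝓝 0) := by
  have hq : Tendsto (fun t : ℝ =>
      ((1 - B * t⁻¹) ^ 2 + (A * t⁻¹) ^ 2) / ((1 + B * t⁻¹) ^ 2 + (A * t⁻¹) ^ 2)) l
      (𝓝 (((1 - B * 0) ^ 2 + (A * 0) ^ 2) / ((1 + B * 0) ^ 2 + (A * 0) ^ 2))) := by
    refine Tendsto.div ?_ ?_ (by norm_num)
    · exact ((tendsto_const_nhds.sub (hinv.const_mul B)).pow 2).add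
        ((hinv.const_mul A).pow 2)
    · exact ((tendsto_const_nhds.add (hinv.const_mul B)).pow 2).add
        ((hinv.const_mul A).pow 2)
  norm_num at hq
  have h2 : Tendsto (fun t : ℝ =>
      ((t - B) ^ 2 + A ^ 2) / ((t + B) ^ 2 + A ^ 2)) l (𝓝 1) := by
    refine hq.congr' ?_
    filter_upwards [hne] with t ht
    have hD2 : ((t + B) ^ 2 + A ^ 2) ≠ 0 := by positivity
    have hq2 : ((1 + B * t⁻¹) ^ 2 + (A * t⁻¹) ^ 2) ≠ 0 := by
      have : (1 + B * t⁻¹) ^ 2 + (A * t⁻¹) ^ 2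
          = ((t + B) ^ 2 + A ^ 2) * (t⁻¹) ^ 2 := by
        field_simp
      rw [this]
      positivity
    rw [div_eq_div_iff hq2 hD2]
    field_simp
  have h3 := (Real.continuousAt_log one_ne_zero).tendsto.comp h2
  rw [Real.log_one] at h3
  refine h3.congr fun t => ?_
  exact Real.log_div (by positivity) (by positivity)

/-- The value of the real integral. -/
lemma real_integral (A B : ℝ) (hA : 0 < A) :
    ∫ t : ℝ, 1 / (((t - B) ^ 2 + A ^ 2) * ((t + B) ^ 2 + A ^ 2))
      = π / (2 * (A ^ 2 + B ^ 2) * A) := by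
  have hint := integrable_aux A B hA
  by_cases hB : B = 0
  · subst hB
    -- antiderivative for the case B = 0
    set F : ℝ → ℝ := fun t => t / (2 * A ^ 2 * (t ^ 2 + A ^ 2))
      + Real.arctan (t / A) / (2 * A ^ 3) with hF
    have hder : ∀ t : ℝ, HasDerivAt F
        (1 / (((t - 0) ^ 2 + A ^ 2) * ((t + 0) ^ 2 + A ^ 2))) t := by
      intro t
      have hden : (0:ℝ) < 2 * A ^ 2 * (t ^ 2 + A ^ 2) := by positivity
      have h1 : HasDerivAt (fun x : ℝ => x ^ 2 + A ^ 2) (2 * t) t := by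
        simpa using (hasDerivAt_pow 2 t).add_const (A ^ 2)
      have hd1 : HasDerivAt (fun x : ℝ => 2 * A ^ 2 * (x ^ 2 + A ^ 2))
          (2 * A ^ 2 * (2 * t)) t := h1.const_mul _
      have hfrac := (hasDerivAt_id t).div hd1 hden.ne'
      have hinner : HasDerivAt (fun x : ℝ => x / A) (1 / A) t := by
        simpa using (hasDerivAt_id t).div_const A
      have harc := ((Real.hasDerivAt_arctan (t / A)).comp t hinner).div_const
        (2 * A ^ 3)
      have := hfrac.add harc
      refine this.congr_deriv ?_
      have e1 : (1 : ℝ) + (t / A) ^ 2 ≠ 0 := by positivity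
      simp only [id_eq]
      field_simp
      ring
    have hfrac0 : ∀ l : Filter ℝ, (∀ᶠ t in l, t ≠ 0) →
        Tendsto (fun t : ℝ => |t|) l atTop →
        Tendsto (fun t : ℝ => t / (2 * A ^ 2 * (t ^ 2 + A ^ 2))) l (𝓝 0) := by
      intro l hne habs
      refine squeeze_zero_norm' (a := fun t : ℝ => (2 * A ^ 2)⁻¹ * |t|⁻¹) ?_ ?_
      · filter_upwards [hne] with t ht
        have habs0 : (0:ℝ) < |t| := abs_pos.mpr ht
        have hden : (0:ℝ) < 2 * A ^ 2 * (t ^ 2 + A ^ 2) := by positivity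
        rw [Real.norm_eq_abs, abs_div, abs_of_pos hden, div_le_iff₀ hden]
        have hrw : (2 * A ^ 2)⁻¹ * |t|⁻¹ * (2 * A ^ 2 * (t ^ 2 + A ^ 2))
            = (t ^ 2 + A ^ 2) / |t| := by
          field_simp
        rw [hrw, le_div_iff₀ habs0]
        nlinarith [abs_mul_abs_self t, sq_nonneg A, abs_nonneg t]
      · have := (habs.inv_tendsto_atTop).const_mul (2 * A ^ 2)⁻¹
        simpa using this
    have harcl : ∀ l : Filter ℝ, ∀ c : ℝ, Tendsto Real.arctan (𝓝 c) (𝓝 (Real.arctan c)) :=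
      fun l c => (Real.continuous_arctan.tendsto c)
    have hlintop : Tendsto (fun t : ℝ => t / A) atTop atTop :=
      Tendsto.atTop_div_const hA tendsto_id
    have hlinbot : Tendsto (fun t : ℝ => t / A) atBot atBot :=
      Tendsto.atBot_div_const hA tendsto_id
    have htop : Tendsto F atTop (𝓝 (0 + (π / 2) / (2 * A ^ 3))) := by
      refine Tendsto.add ?_ ?_
      · exact hfrac0 atTop (eventually_ne_atTop 0) tendsto_abs_atTop_atTop
      · exact (((tendsto_nhds_of_tendsto_nhdsWithin Real.tendsto_arctan_atTop).comp
          hlintop).div_const _)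
    have hbot : Tendsto F atBot (𝓝 (0 + (-(π / 2)) / (2 * A ^ 3))) := by
      refine Tendsto.add ?_ ?_
      · exact hfrac0 atBot (eventually_ne_atBot 0) tendsto_abs_atBot_atTop
      · exact (((tendsto_nhds_of_tendsto_nhdsWithin Real.tendsto_arctan_atBot).comp
          hlinbot).div_const _)
    rw [MeasureTheory.integral_of_hasDerivAt_of_tendsto hder hint hbot htop]
    field_simp
    ring
  · -- case B ≠ 0
    have hs : (0:ℝ) < A ^ 2 + B ^ 2 := by positivity
    set F : ℝ → ℝ := fun t =>
      (-(1 / (8 * B * (A ^ 2 + B ^ 2))))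
          * (Real.log ((t - B) ^ 2 + A ^ 2) - Real.log ((t + B) ^ 2 + A ^ 2))
        + (1 / (4 * (A ^ 2 + B ^ 2) * A))
          * (Real.arctan ((t - B) / A) + Real.arctan ((t + B) / A)) with hFdef
    have hder : ∀ t : ℝ, HasDerivAt F
        (1 / (((t - B) ^ 2 + A ^ 2) * ((t + B) ^ 2 + A ^ 2))) t := by
      intro t
      have hD1 : (0:ℝ) < (t - B) ^ 2 + A ^ 2 := by positivity
      have hD2 : (0:ℝ) < (t + B) ^ 2 + A ^ 2 := by positivity
      have h1 : HasDerivAt (fun x : ℝ => (x - B) ^ 2 + A ^ 2) (2 * (t - B)) t := by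
        have := (((hasDerivAt_id t).sub_const B).pow 2).add_const (A ^ 2)
        refine this.congr_deriv ?_
        simp
      have h2 : HasDerivAt (fun x : ℝ => (x + B) ^ 2 + A ^ 2) (2 * (t + B)) t := by
        have := (((hasDerivAt_id t).add_const B).pow 2).add_const (A ^ 2)
        refine this.congr_deriv ?_
        simp
      have hlog1 := (Real.hasDerivAt_log hD1.ne').comp t h1
      have hlog2 := (Real.hasDerivAt_log hD2.ne').comp t h2
      have hi1 : HasDerivAt (fun x : ℝ => (x - B) / A) (1 / A) t := by
        simpa using ((hasDerivAt_id t).sub_const B).div_const A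
      have hi2 : HasDerivAt (fun x : ℝ => (x + B) / A) (1 / A) t := by
        simpa using ((hasDerivAt_id t).add_const B).div_const A
      have harc1 := (Real.hasDerivAt_arctan ((t - B) / A)).comp t hi1
      have harc2 := (Real.hasDerivAt_arctan ((t + B) / A)).comp t hi2
      have := ((hlog1.sub hlog2).const_mul (-(1 / (8 * B * (A ^ 2 + B ^ 2))))).add
        ((harc1.add harc2).const_mul (1 / (4 * (A ^ 2 + B ^ 2) * A)))
      refine this.congr_deriv ?_
      have e1 : (1 : ℝ) + ((t - B) / A) ^ 2 ≠ 0 := by positivity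
      have e2 : (1 : ℝ) + ((t + B) / A) ^ 2 ≠ 0 := by positivity
      field_simp
      ring
    have harctop : Tendsto (fun t : ℝ =>
        Real.arctan ((t - B) / A) + Real.arctan ((t + B) / A)) atTop
        (𝓝 (π / 2 + π / 2)) := by
      have l1 : Tendsto (fun t : ℝ => (t - B) / A) atTop atTop :=
        Tendsto.atTop_div_const hA
          (by simpa [sub_eq_add_neg] using
            tendsto_atTop_add_const_right atTop (-B) (tendsto_id (α := ℝ)))
      have l2 : Tendsto (fun t : ℝ => (t + B) / A) atTop atTop :=
        Tendsto.atTop_div_const hA (tendsto_atTop_add_const_right atTop B tendsto_id)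
      exact ((tendsto_nhds_of_tendsto_nhdsWithin Real.tendsto_arctan_atTop).comp l1).add
        ((tendsto_nhds_of_tendsto_nhdsWithin Real.tendsto_arctan_atTop).comp l2)
    have harcbot : Tendsto (fun t : ℝ =>
        Real.arctan ((t - B) / A) + Real.arctan ((t + B) / A)) atBot
        (𝓝 (-(π / 2) + -(π / 2))) := by
      have l1 : Tendsto (fun t : ℝ => (t - B) / A) atBot atBot :=
        Tendsto.atBot_div_const hA
          (by simpa [sub_eq_add_neg] using
            tendsto_atBot_add_const_right atBot (-B) (tendsto_id (α := ℝ)))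
      have l2 : Tendsto (fun t : ℝ => (t + B) / A) atBot atBot :=
        Tendsto.atBot_div_const hA (tendsto_atBot_add_const_right atBot B tendsto_id)
      exact ((tendsto_nhds_of_tendsto_nhdsWithin Real.tendsto_arctan_atBot).comp l1).add
        ((tendsto_nhds_of_tendsto_nhdsWithin Real.tendsto_arctan_atBot).comp l2)
    have hinvbot : Tendsto (fun t : ℝ => t⁻¹) atBot (𝓝 0) := by
      rw [tendsto_zero_iff_norm_tendsto_zero]
      have := tendsto_abs_atBot_atTop.inv_tendsto_atTop (α := ℝ)
      refine this.congr fun t => ?_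
      simp [Real.norm_eq_abs, abs_inv]
    have htop : Tendsto F atTop
        (𝓝 ((-(1 / (8 * B * (A ^ 2 + B ^ 2)))) * 0
          + (1 / (4 * (A ^ 2 + B ^ 2) * A)) * (π / 2 + π / 2))) := by
      exact ((tendsto_log_ratio A B hA atTop (eventually_ne_atTop 0)
        tendsto_inv_atTop_zero).const_mul _).add (harctop.const_mul _)
    have hbot : Tendsto F atBot
        (𝓝 ((-(1 / (8 * B * (A ^ 2 + B ^ 2)))) * 0
          + (1 / (4 * (A ^ 2 + B ^ 2) * A)) * (-(π / 2) + -(π / 2)))) := by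
      exact ((tendsto_log_ratio A B hA atBot (eventually_ne_atBot 0)
        hinvbot).const_mul _).add (harcbot.const_mul _)
    rw [MeasureTheory.integral_of_hasDerivAt_of_tendsto hder hint hbot htop]
    field_simp
    ring

theorem integral_one_div_sq_abs_sq_add_sq (lam : ℂ) (h : lam.re ≠ 0) :
    ∫ t : ℝ, 1 / ‖(t : ℂ) ^ 2 + lam ^ 2‖ ^ 2
      = π / (2 * ‖lam‖ ^ 2 * |lam.re|) := by
  have hb : ∀ t : ℝ, (1:ℝ) / ‖(t : ℂ) ^ 2 + lam ^ 2‖ ^ 2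
      = 1 / (((t - lam.im) ^ 2 + |lam.re| ^ 2) * ((t + lam.im) ^ 2 + |lam.re| ^ 2)) := by
    intro t
    have h1 : ‖(t : ℂ) ^ 2 + lam ^ 2‖ ^ 2
        = (t ^ 2 + lam.re ^ 2 - lam.im ^ 2) ^ 2 + (2 * lam.re * lam.im) ^ 2 := by
      rw [Complex.sq_norm, Complex.normSq_apply]
      simp only [Complex.add_re, Complex.add_im, pow_two, Complex.mul_re, Complex.mul_im,
        Complex.ofReal_re, Complex.ofReal_im]
      ring
    rw [h1]
    congr 1
    rw [sq_abs]
    ring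
  simp only [hb]
  rw [real_integral |lam.re| lam.im (abs_pos.mpr h)]
  rw [Complex.sq_norm, Complex.normSq_apply]
  rw [sq_abs]
  ring_nf
end

section
/- For real numbers a > 0 and c with |c| ≤ a², the integral ∫₀^∞ dx / √(x⁴ + 2c x² + a⁴) equals (1/a) · K(√(a² − c)/(a√2)), where K(k) = ∫₀^{π/2} dθ / √(1 − k² sin²θ) is the complete elliptic integral of the first kind. -/
open MeasureTheory Real

/-- The complete elliptic integral of the first kind. -/
noncomputable def ellipticK (k : ℝ) : ℝ :=
  ∫ θ in (0 : ℝ)..(π / 2), 1 / Real.sqrt (1 - k ^ 2 * Real.sin θ ^ 2)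

lemma double_aux (f : ℝ → ℝ) (hsym : ∀ x, f (π - x) = f x) :
    ∫ x in (0:ℝ)..π, f x = 2 * ∫ x in (0:ℝ)..(π/2), f x := by
  have hrefl : ∫ x in (π/2:ℝ)..π, f x = ∫ x in (0:ℝ)..(π/2), f x := by
    have h := intervalIntegral.integral_comp_sub_left (a := 0) (b := π/2) f π
    simp only [hsym] at h
    rw [show π - π/2 = π/2 by ring, sub_zero] at h
    exact h.symm
  by_cases hint : IntervalIntegrable f volume 0 (π/2)
  · have hint2 : IntervalIntegrable f volume (π/2) π := by
      have h := hint.comp_sub_left π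
      simp only [hsym] at h
      rw [show π - 0 = π by ring, show π - π/2 = π/2 by ring] at h
      exact h.symm
    rw [← intervalIntegral.integral_add_adjacent_intervals hint hint2, hrefl]
    ring
  · have hint2 : ¬ IntervalIntegrable f volume 0 π := by
      intro h
      exact hint (h.mono_set (Set.uIcc_subset_uIcc (Set.left_mem_uIcc)
        (by rw [Set.uIcc_of_le pi_pos.le]; constructor <;> [positivity; linarith [pi_pos]])))
    rw [intervalIntegral.integral_undef hint, intervalIntegral.integral_undef hint2]
    ring

theorem integral_one_div_sqrt_quartic (a c : ℝ) (ha : 0 < a) (hc : |c| ≤ a ^ 2) :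
    ∫ x in Set.Ioi (0 : ℝ), 1 / Real.sqrt (x ^ 4 + 2 * c * x ^ 2 + a ^ 4)
      = (1 / a) * ellipticK (Real.sqrt (a ^ 2 - c) / (a * Real.sqrt 2)) := by
  obtain ⟨hc2, hc1⟩ := abs_le.mp hc
  have ha2 : (0:ℝ) < a ^ 2 := by positivity
  set k : ℝ := Real.sqrt (a ^ 2 - c) / (a * Real.sqrt 2) with hk
  have hk2 : k ^ 2 = (a ^ 2 - c) / (2 * a ^ 2) := by
    rw [hk, div_pow, mul_pow, sq_sqrt (by linarith), sq_sqrt (by norm_num : (0:ℝ) ≤ 2)]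
    ring
  have hk2le : k ^ 2 ≤ 1 := by
    rw [hk2, div_le_one (by positivity)]; linarith
  -- Step 1 : change of variables x = a * tan θ
  have himg : Set.Ioi (0:ℝ) = (fun θ => a * Real.tan θ) '' Set.Ioo 0 (π/2) := by
    ext y
    simp only [Set.mem_image, Set.mem_Ioi, Set.mem_Ioo]
    constructor
    · intro hy
      refine ⟨Real.arctan (y / a), ⟨?_, Real.arctan_lt_pi_div_two _⟩, ?_⟩
      · simpa using Real.arctan_strictMono (show (0:ℝ) < y / a by positivity)
      · rw [Real.tan_arctan]; field_simp
    · rintro ⟨θ, ⟨h1, h2⟩, rfl⟩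
      exact mul_pos ha (Real.tan_pos_of_pos_of_lt_pi_div_two h1 h2)
  have hmem : ∀ θ ∈ Set.Ioo (0:ℝ) (π/2), θ ∈ Set.Ioo (-(π/2)) (π/2) := by
    rintro θ ⟨h1, h2⟩
    exact ⟨by linarith [pi_pos], h2⟩
  have hcos : ∀ θ ∈ Set.Ioo (0:ℝ) (π/2), 0 < Real.cos θ := fun θ hθ =>
    Real.cos_pos_of_mem_Ioo (hmem θ hθ)
  have hderiv : ∀ θ ∈ Set.Ioo (0:ℝ) (π/2),
      HasDerivWithinAt (fun θ => a * Real.tan θ) (a / Real.cos θ ^ 2) (Set.Ioo 0 (π/2)) θ := by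
    intro θ hθ
    have h := (Real.hasDerivAt_tan (hcos θ hθ).ne').const_mul a
    rw [show a * (1 / Real.cos θ ^ 2) = a / Real.cos θ ^ 2 by ring] at h
    exact h.hasDerivWithinAt
  have hinj : Set.InjOn (fun θ => a * Real.tan θ) (Set.Ioo 0 (π/2)) := by
    intro x hx y hy hxy
    exact Real.injOn_tan (hmem x hx) (hmem y hy) (mul_left_cancel₀ ha.ne' hxy)
  rw [himg, MeasureTheory.integral_image_eq_integral_abs_deriv_smul measurableSet_Ioo hderiv hinj]
  -- Step 2 : simplify the integrand
  have hintegrand : ∀ θ ∈ Set.Ioo (0:ℝ) (π/2),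
      |a / Real.cos θ ^ 2| • (1 / Real.sqrt ((a * Real.tan θ) ^ 4 +
          2 * c * (a * Real.tan θ) ^ 2 + a ^ 4))
        = (1/a) * (1 / Real.sqrt (1 - k ^ 2 * Real.sin (2 * θ) ^ 2)) := by
    intro θ hθ
    have hcθ := hcos θ hθ
    have key : (a * Real.tan θ) ^ 4 + 2 * c * (a * Real.tan θ) ^ 2 + a ^ 4
        = (a ^ 2 / Real.cos θ ^ 2) ^ 2 * (1 - k ^ 2 * Real.sin (2 * θ) ^ 2) := by
      rw [Real.tan_eq_sin_div_cos, Real.sin_two_mul, hk2]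
      have hsc := Real.sin_sq_add_cos_sq θ
      field_simp
      linear_combination (a ^ 2 *
        (Real.sin θ ^ 2 + Real.cos θ ^ 2 + 1)) * hsc
    rw [key, Real.sqrt_mul (sq_nonneg _), Real.sqrt_sq (by positivity), smul_eq_mul,
      abs_of_pos (by positivity)]
    rcases eq_or_ne (Real.sqrt (1 - k ^ 2 * Real.sin (2 * θ) ^ 2)) 0 with h0 | h0
    · rw [h0]; simp
    · field_simp
  rw [MeasureTheory.setIntegral_congr_fun measurableSet_Ioo hintegrand]
  rw [← MeasureTheory.integral_Ioc_eq_integral_Ioo,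
    ← intervalIntegral.integral_of_le (by positivity : (0:ℝ) ≤ π/2)]
  rw [intervalIntegral.integral_const_mul]
  congr 1
  -- Step 3 : substitution φ = 2θ and symmetry
  have hcomp := intervalIntegral.integral_comp_mul_left
    (a := 0) (b := π/2) (fun φ => 1 / Real.sqrt (1 - k ^ 2 * Real.sin φ ^ 2))
    (two_ne_zero)
  rw [mul_zero, show (2:ℝ) * (π/2) = π by ring] at hcomp
  rw [hcomp, smul_eq_mul,
    double_aux (fun φ => 1 / Real.sqrt (1 - k ^ 2 * Real.sin φ ^ 2))
      (fun x => by simp [Real.sin_pi_sub])]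
  rw [ellipticK]
  ring
end

section
/- For k ∈ (-1, 1), the complete elliptic integral of the first kind satisfies K(k) ≤ (π/2)(1 − (1/π) · log(1 − k²)). -/
open MeasureTheory Real

open intervalIntegral


/-- Quartic lower bound for `-log (1-x)`. -/
lemma aux_log_lower (x : ℝ) (h0 : 0 ≤ x) (h1 : x < 1) :
    x + x^2/2 + x^3/3 + x^4/4 ≤ -Real.log (1-x) := by
  set F : ℝ → ℝ := fun t => -Real.log (1-t) - (t + t^2/2 + t^3/3 + t^4/4) with hF
  have key : ∀ y ∈ Set.uIcc (0:ℝ) x, HasDerivAt F (y^4/(1-y)) y := by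
    intro y hy
    rw [Set.uIcc_of_le h0] at hy
    have hy1 : (0:ℝ) < 1 - y := by nlinarith [hy.1, hy.2]
    have h1y : HasDerivAt (fun t : ℝ => 1 - t) (-1) y := by
      simpa using (hasDerivAt_id y).const_sub 1
    have hlog : HasDerivAt (fun t : ℝ => Real.log (1-t)) (-1/(1-y)) y := h1y.log hy1.ne'
    have hpoly : HasDerivAt (fun t : ℝ => t + t^2/2 + t^3/3 + t^4/4)
        (1 + (2:ℕ)*y^1/2 + (3:ℕ)*y^2/3 + (4:ℕ)*y^3/4) y := by
      exact (((hasDerivAt_id y).add ((hasDerivAt_pow 2 y).div_const 2)).add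
        ((hasDerivAt_pow 3 y).div_const 3)).add ((hasDerivAt_pow 4 y).div_const 4)
    have := (hlog.neg).sub hpoly
    refine this.congr_deriv (Eq.symm ?_)
    push_cast
    field_simp
    ring
  have hcont : IntervalIntegrable (fun y : ℝ => y^4/(1-y)) volume 0 x := by
    apply ContinuousOn.intervalIntegrable
    apply ContinuousOn.div (by fun_prop) (by fun_prop)
    intro y hy
    rw [Set.uIcc_of_le h0] at hy
    nlinarith [hy.1, hy.2]
  have hInt := integral_eq_sub_of_hasDerivAt key hcont
  have hnn : 0 ≤ ∫ y in (0:ℝ)..x, y^4/(1-y) := by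
    apply intervalIntegral.integral_nonneg h0
    intro y hy
    have hy1 : (0:ℝ) < 1 - y := by nlinarith [hy.1, hy.2]
    positivity
  rw [hInt] at hnn
  simp only [hF] at hnn
  simp at hnn
  linarith [hnn]

/-- Degree-9 upper bound for arctan. -/
lemma aux_arctan_le (y : ℝ) (h : 0 ≤ y) :
    Real.arctan y ≤ y - y^3/3 + y^5/5 - y^7/7 + y^9/9 := by
  set F : ℝ → ℝ := fun t => t - t^3/3 + t^5/5 - t^7/7 + t^9/9 - Real.arctan t with hF
  have key : ∀ t ∈ Set.uIcc (0:ℝ) y, HasDerivAt F (t^10/(1+t^2)) t := by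
    intro t _
    have h1 : (0:ℝ) < 1 + t^2 := by positivity
    have hpoly : HasDerivAt (fun s : ℝ => s - s^3/3 + s^5/5 - s^7/7 + s^9/9)
        (1 - (3:ℕ)*t^2/3 + (5:ℕ)*t^4/5 - (7:ℕ)*t^6/7 + (9:ℕ)*t^8/9) t :=
      ((((hasDerivAt_id t).sub ((hasDerivAt_pow 3 t).div_const 3)).add
        ((hasDerivAt_pow 5 t).div_const 5)).sub ((hasDerivAt_pow 7 t).div_const 7)).add
        ((hasDerivAt_pow 9 t).div_const 9)
    have := hpoly.sub (Real.hasDerivAt_arctan t)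
    refine this.congr_deriv (Eq.symm ?_)
    push_cast
    field_simp
    ring
  have hcont : IntervalIntegrable (fun t : ℝ => t^10/(1+t^2)) volume 0 y := by
    apply ContinuousOn.intervalIntegrable
    apply ContinuousOn.div (by fun_prop) (by fun_prop)
    intro t _; positivity
  have hInt := integral_eq_sub_of_hasDerivAt key hcont
  have hnn : 0 ≤ ∫ t in (0:ℝ)..y, t^10/(1+t^2) := by
    apply intervalIntegral.integral_nonneg h
    intro t _; positivity
  rw [hInt] at hnn
  simp only [hF] at hnn
  simp [Real.arctan_zero] at hnn
  linarith [hnn]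

/-- Degree-7 lower bound for arctan. -/
lemma aux_arctan_ge (y : ℝ) (h : 0 ≤ y) :
    y - y^3/3 + y^5/5 - y^7/7 ≤ Real.arctan y := by
  set F : ℝ → ℝ := fun t => Real.arctan t - (t - t^3/3 + t^5/5 - t^7/7) with hF
  have key : ∀ t ∈ Set.uIcc (0:ℝ) y, HasDerivAt F (t^8/(1+t^2)) t := by
    intro t _
    have h1 : (0:ℝ) < 1 + t^2 := by positivity
    have hpoly : HasDerivAt (fun s : ℝ => s - s^3/3 + s^5/5 - s^7/7)
        (1 - (3:ℕ)*t^2/3 + (5:ℕ)*t^4/5 - (7:ℕ)*t^6/7) t :=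
      (((hasDerivAt_id t).sub ((hasDerivAt_pow 3 t).div_const 3)).add
        ((hasDerivAt_pow 5 t).div_const 5)).sub ((hasDerivAt_pow 7 t).div_const 7)
    have := (Real.hasDerivAt_arctan t).sub hpoly
    refine this.congr_deriv (Eq.symm ?_)
    push_cast
    field_simp
    ring
  have hcont : IntervalIntegrable (fun t : ℝ => t^8/(1+t^2)) volume 0 y := by
    apply ContinuousOn.intervalIntegrable
    apply ContinuousOn.div (by fun_prop) (by fun_prop)
    intro t _; positivity
  have hInt := integral_eq_sub_of_hasDerivAt key hcont
  have hnn : 0 ≤ ∫ t in (0:ℝ)..y, t^8/(1+t^2) := by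
    apply intervalIntegral.integral_nonneg h
    intro t _; positivity
  rw [hInt] at hnn
  simp only [hF] at hnn
  simp [Real.arctan_zero] at hnn
  linarith [hnn]

/-- Cubic upper bound for `log (1+u)`. -/
lemma aux_log1p_le (u : ℝ) (h : 0 ≤ u) :
    Real.log (1+u) ≤ u - u^2/2 + u^3/3 := by
  set F : ℝ → ℝ := fun t => (t - t^2/2 + t^3/3) - Real.log (1+t) with hF
  have key : ∀ t ∈ Set.uIcc (0:ℝ) u, HasDerivAt F (t^3/(1+t)) t := by
    intro t ht
    rw [Set.uIcc_of_le h] at ht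
    have h1 : (0:ℝ) < 1 + t := by nlinarith [ht.1]
    have h1t : HasDerivAt (fun s : ℝ => 1 + s) 1 t := by
      simpa using (hasDerivAt_id t).const_add 1
    have hlog : HasDerivAt (fun s : ℝ => Real.log (1+s)) (1/(1+t)) t := by
      simpa using h1t.log h1.ne'
    have hpoly : HasDerivAt (fun s : ℝ => s - s^2/2 + s^3/3)
        (1 - (2:ℕ)*t^1/2 + (3:ℕ)*t^2/3) t :=
      ((hasDerivAt_id t).sub ((hasDerivAt_pow 2 t).div_const 2)).add
        ((hasDerivAt_pow 3 t).div_const 3)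
    have := hpoly.sub hlog
    refine this.congr_deriv (Eq.symm ?_)
    push_cast
    field_simp
    ring
  have hcont : IntervalIntegrable (fun t : ℝ => t^3/(1+t)) volume 0 u := by
    apply ContinuousOn.intervalIntegrable
    apply ContinuousOn.div (by fun_prop) (by fun_prop)
    intro t ht
    rw [Set.uIcc_of_le h] at ht
    nlinarith [ht.1]
  have hInt := integral_eq_sub_of_hasDerivAt key hcont
  have hnn : 0 ≤ ∫ t in (0:ℝ)..u, t^3/(1+t) := by
    apply intervalIntegral.integral_nonneg h
    intro t ht
    have h1 : (0:ℝ) < 1 + t := by nlinarith [ht.1]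
    exact div_nonneg (pow_nonneg ht.1 3) h1.le
  rw [hInt] at hnn
  simp only [hF] at hnn
  simp at hnn
  linarith [hnn]

/-- Numeric bound on log (4/3). -/
lemma aux_log43 : Real.log (4/3) ≤ 289/1000 := by
  rw [Real.log_le_iff_le_exp (by norm_num)]
  have h := Real.sum_le_exp_of_nonneg (x := 289/1000) (by norm_num) 4
  refine le_trans ?_ h
  rw [Finset.sum_range_succ, Finset.sum_range_succ, Finset.sum_range_succ,
    Finset.sum_range_succ]
  norm_num [Nat.factorial]


lemma aux_invsqrt (x : ℝ) (h0 : 0 ≤ x) (h1 : x ≤ 18/25) :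
    1 / Real.sqrt (1-x) ≤ 1 + x/2 + 3*x^2/8 + 5*x^3/16 + 125*x^4/128 := by
  set P : ℝ := 1 + x/2 + 3*x^2/8 + 5*x^3/16 + 125*x^4/128 with hPdef
  have hP : 0 < P := by positivity
  have key : 1 ≤ (1-x) * P^2 := by
    simp only [hPdef]
    nlinarith [mul_nonneg (mul_nonneg (pow_nonneg h0 4) h0) (sub_nonneg.mpr h1),
      mul_nonneg (pow_nonneg h0 4) (sub_nonneg.mpr h1), pow_nonneg h0 4, pow_nonneg h0 8,
      mul_nonneg (pow_nonneg h0 8) (sub_nonneg.mpr h1), sq_nonneg x, pow_nonneg h0 3]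
  have hsq : 1/P ≤ Real.sqrt (1-x) := by
    rw [Real.le_sqrt (by positivity) (by linarith)]
    rw [div_pow, one_pow, div_le_iff₀ (by positivity)]
    linarith
  calc 1 / Real.sqrt (1-x) ≤ 1 / (1/P) := by
        apply one_div_le_one_div_of_le (by positivity) hsq
    _ = P := one_div_one_div P

lemma wallis2 : ∫ θ in (0:ℝ)..(π/2), sin θ^2 = π/4 := by
  rw [integral_sin_sq]
  simp
  ring

lemma wallis4 : ∫ θ in (0:ℝ)..(π/2), sin θ^4 = 3*π/16 := by
  have h := integral_sin_pow (a := 0) (b := π/2) 2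
  norm_num [wallis2] at h
  linarith

lemma wallis6 : ∫ θ in (0:ℝ)..(π/2), sin θ^6 = 15*π/96 := by
  have h := integral_sin_pow (a := 0) (b := π/2) 4
  norm_num [wallis4] at h
  linarith

lemma wallis8 : ∫ θ in (0:ℝ)..(π/2), sin θ^8 = 35*π/256 := by
  have h := integral_sin_pow (a := 0) (b := π/2) 6
  norm_num [wallis6] at h
  linarith


lemma aux_sqrt_ub (x : ℝ) (h0 : 0 ≤ x) (h1 : x ≤ 7/25) :
    Real.sqrt (4+9*x) ≤ 2 + 9*x/4 - (9*x/4)^2/4 + (9*x/4)^3/8 := by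
  rw [Real.sqrt_le_iff]
  constructor
  · nlinarith
  · nlinarith [sq_nonneg x, sq_nonneg (x^2), sq_nonneg (x^3), mul_nonneg h0 h0,
      mul_nonneg (mul_nonneg h0 h0) h0, sub_nonneg.mpr h1,
      mul_nonneg (mul_nonneg h0 h0) (sub_nonneg.mpr h1)]

lemma aux_sqrt_ub2 (x : ℝ) (h0 : 0 ≤ x) :
    Real.sqrt (4+9*x) ≤ 2 + 9*x/4 := by
  rw [Real.sqrt_le_iff]
  constructor
  · nlinarith
  · nlinarith [sq_nonneg x]

lemma aux_sqrt_lb (x : ℝ) (h0 : 0 ≤ x) (h1 : x ≤ 7/25) :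
    2 + 9*x/4 - (9*x/4)^2/4 ≤ Real.sqrt (4+9*x) := by
  rw [Real.le_sqrt (by nlinarith) (by nlinarith)]
  nlinarith [sq_nonneg x, mul_nonneg (mul_nonneg h0 h0) h0,
    mul_nonneg (mul_nonneg h0 h0) (sub_nonneg.mpr h1)]

lemma aux_final_poly (x : ℝ) (h0 : 0 ≤ x) (h1 : x ≤ 7/25) :
    (3/4 - 9/16*x + 243/320*x^2 - 2187/1792*x^3 + 19683/9216*x^4)
    + (9*x/16 - (9*x/4)^2/16 + (9*x/4)^3/32 - (9*x/16 - (9*x/4)^2/16)^2/2 + (9*x/16)^3/3)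
    + 289/1000
    ≤ π/4 + (2/3 - (2/3)^3/3 + (2/3)^5/5 - (2/3)^7/7)/2 := by
  have hπ := Real.pi_gt_d6
  nlinarith [sq_nonneg x, mul_nonneg (mul_nonneg h0 h0) h0,
    mul_nonneg (mul_nonneg (mul_nonneg h0 h0) h0) h0,
    mul_nonneg (mul_nonneg h0 h0) (sub_nonneg.mpr h1),
    mul_nonneg (mul_nonneg (mul_nonneg h0 h0) h0) (sub_nonneg.mpr h1),
    mul_nonneg h0 (sub_nonneg.mpr h1)]

lemma case1 (m : ℝ) (h0 : 0 ≤ m) (h1 : m ≤ 18/25) :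
    (∫ θ in (0:ℝ)..(π/2), 1 / Real.sqrt (1 - m * sin θ^2)) ≤ π/2 - Real.log (1-m)/2 := by
  have hm1 : m < 1 := by linarith
  have hD : ∀ θ : ℝ, 0 < 1 - m * sin θ^2 := by
    intro θ
    nlinarith [sin_sq_le_one θ, sq_nonneg (sin θ)]
  have hfc : Continuous (fun θ : ℝ => 1 / Real.sqrt (1 - m * sin θ^2)) := by
    apply Continuous.div continuous_const
    · exact (Real.continuous_sqrt.comp (by fun_prop))
    · exact fun θ => (Real.sqrt_pos.mpr (hD θ)).ne'
  set g : ℝ → ℝ := fun θ => 1 + m/2 * sin θ^2 + 3*m^2/8 * sin θ^4 + 5*m^3/16 * sin θ^6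
      + 125*m^4/128 * sin θ^8 with hg
  have hgc : Continuous g := by fun_prop
  have hmono : (∫ θ in (0:ℝ)..(π/2), 1 / Real.sqrt (1 - m * sin θ^2))
      ≤ ∫ θ in (0:ℝ)..(π/2), g θ := by
    apply intervalIntegral.integral_mono_on (by positivity)
      (hfc.intervalIntegrable _ _) (hgc.intervalIntegrable _ _)
    intro θ _
    have hx0 : 0 ≤ m * sin θ^2 := by positivity
    have hx1 : m * sin θ^2 ≤ 18/25 := by nlinarith [sin_sq_le_one θ]
    have h := aux_invsqrt (m * sin θ^2) hx0 hx1
    calc 1 / Real.sqrt (1 - m * sin θ^2) ≤ 1 + (m*sin θ^2)/2 + 3*(m*sin θ^2)^2/8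
          + 5*(m*sin θ^2)^3/16 + 125*(m*sin θ^2)^4/128 := h
      _ = g θ := by simp only [hg]; ring
  have hgval : (∫ θ in (0:ℝ)..(π/2), g θ)
      = π/2 + m/2*(π/4) + 3*m^2/8*(3*π/16) + 5*m^3/16*(15*π/96) + 125*m^4/128*(35*π/256) := by
    simp only [hg]
    rw [intervalIntegral.integral_add (by apply Continuous.intervalIntegrable; fun_prop)
          (by apply Continuous.intervalIntegrable; fun_prop),
        intervalIntegral.integral_add (by apply Continuous.intervalIntegrable; fun_prop)
          (by apply Continuous.intervalIntegrable; fun_prop),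
        intervalIntegral.integral_add (by apply Continuous.intervalIntegrable; fun_prop)
          (by apply Continuous.intervalIntegrable; fun_prop),
        intervalIntegral.integral_add (by apply Continuous.intervalIntegrable; fun_prop)
          (by apply Continuous.intervalIntegrable; fun_prop)]
    rw [intervalIntegral.integral_const_mul, intervalIntegral.integral_const_mul, intervalIntegral.integral_const_mul, intervalIntegral.integral_const_mul,
        wallis2, wallis4, wallis6, wallis8]
    simp
  have hlog := aux_log_lower m h0 hm1
  have hpi := Real.pi_lt_d6
  have hpi2 := Real.pi_gt_d6
  rw [hgval] at hmono
  refine hmono.trans ?_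
  have hfin : m/2*(π/4) + 3*m^2/8*(3*π/16) + 5*m^3/16*(15*π/96) + 125*m^4/128*(35*π/256)
      ≤ (m + m^2/2 + m^3/3 + m^4/4)/2 := by
    nlinarith [mul_nonneg h0 h0, mul_nonneg (mul_nonneg h0 h0) h0,
      mul_nonneg (mul_nonneg (mul_nonneg h0 h0) h0) h0,
      mul_nonneg (mul_nonneg (mul_nonneg h0 h0) h0) (sub_nonneg.mpr h1),
      mul_nonneg (mul_nonneg h0 h0) (sub_nonneg.mpr h1),
      mul_nonneg h0 (sub_nonneg.mpr h1)]
  linarith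

set_option maxHeartbeats 1000000 in
lemma case2 (m : ℝ) (h0 : 18/25 ≤ m) (h1 : m < 1) :
    (∫ θ in (0:ℝ)..(π/2), 1 / Real.sqrt (1 - m * sin θ^2)) ≤ π/2 - Real.log (1-m)/2 := by
  have hm0 : (0:ℝ) ≤ m := by linarith
  set q := Real.sqrt (1-m) with hqdef
  have hq0 : 0 < q := Real.sqrt_pos.mpr (by linarith)
  have hq2 : q^2 = 1-m := Real.sq_sqrt (by linarith)
  have hqb : q^2 ≤ 7/25 := by rw [hq2]; linarith
  have hD : ∀ θ : ℝ, 0 < 1 - m * sin θ^2 := by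
    intro θ; nlinarith [sin_sq_le_one θ, sq_nonneg (sin θ)]
  have hfc : Continuous (fun θ : ℝ => 1 / Real.sqrt (1 - m * sin θ^2)) := by
    apply Continuous.div continuous_const
    · exact (Real.continuous_sqrt.comp (by fun_prop))
    · exact fun θ => (Real.sqrt_pos.mpr (hD θ)).ne'
  set θ₀ := Real.arctan (3/2) with hθ₀def
  have h00 : 0 < θ₀ := by
    rw [hθ₀def, ← Real.arctan_zero]
    exact Real.arctan_strictMono (by norm_num)
  have hθπ : θ₀ < π/2 := Real.arctan_lt_pi_div_two _
  have htan : Real.tan θ₀ = 3/2 := Real.tan_arctan _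
  have h13 : (0:ℝ) < Real.sqrt 13 := Real.sqrt_pos.mpr (by norm_num)
  have hsqrt134 : Real.sqrt (1+(3/2:ℝ)^2) = Real.sqrt 13 / 2 := by
    have h : ((Real.sqrt 13)/2)^2 = 1+(3/2:ℝ)^2 := by
      rw [div_pow, Real.sq_sqrt (by norm_num : (0:ℝ) ≤ 13)]; norm_num
    rw [← h, Real.sqrt_sq (by positivity)]
  have hs0 : Real.sin θ₀ = 3/Real.sqrt 13 := by
    rw [hθ₀def, Real.sin_arctan, hsqrt134]
    field_simp
  have hc0 : Real.cos θ₀ = 2/Real.sqrt 13 := by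
    rw [hθ₀def, Real.cos_arctan, hsqrt134]
    field_simp
  -- Region I derivative
  set H1 : ℝ → ℝ := fun θ => θ/2 + Real.arctan (q * Real.tan θ) / (2*q) with hH1def
  have hH1 : ∀ θ ∈ Set.uIcc (0:ℝ) θ₀, HasDerivAt H1 (1/2 + 1/(2*(1 - m * sin θ^2))) θ := by
    intro θ hθ
    rw [Set.uIcc_of_le h00.le] at hθ
    have hcos : 0 < Real.cos θ := by
      apply Real.cos_pos_of_mem_Ioo
      constructor
      · linarith [hθ.1, Real.pi_pos]
      · exact lt_of_le_of_lt hθ.2 hθπ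
    have ht : HasDerivAt (fun θ : ℝ => q * Real.tan θ) (q * (1/Real.cos θ^2)) θ :=
      (Real.hasDerivAt_tan hcos.ne').const_mul q
    have ha := (Real.hasDerivAt_arctan (q * Real.tan θ)).comp θ ht
    have hsum := ((hasDerivAt_id θ).div_const 2).add (ha.div_const (2*q))
    refine hsum.congr_deriv (Eq.symm ?_)
    have hpy := Real.sin_sq_add_cos_sq θ
    have hval : 1 + (q * Real.tan θ)^2 = (1 - m * Real.sin θ^2)/Real.cos θ^2 := by
      rw [Real.tan_eq_sin_div_cos]
      field_simp
      linear_combination Real.sin θ^2 * hq2 + (1 - m*Real.sin θ^2) * hpy + m * Real.sin θ^2 * hpy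
    rw [hval]
    have hDθ := hD θ
    field_simp
  -- Region II derivative
  set H2 : ℝ → ℝ := fun θ => Real.log (q * Real.sin θ)
      - Real.log (Real.cos θ + Real.sqrt (1 - m * Real.sin θ^2)) with hH2def
  have hH2 : ∀ θ ∈ Set.uIcc θ₀ (π/2), HasDerivAt H2
      (1/(Real.sin θ * Real.sqrt (1 - m * Real.sin θ^2))) θ := by
    intro θ hθ
    rw [Set.uIcc_of_le hθπ.le] at hθ
    have hsin : 0 < Real.sin θ :=
      Real.sin_pos_of_pos_of_lt_pi (lt_of_lt_of_le h00 hθ.1) (by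
        have := Real.pi_pos; linarith [hθ.2])
    have hcos : 0 ≤ Real.cos θ := Real.cos_nonneg_of_mem_Icc
      ⟨by linarith [hθ.1, h00, Real.pi_pos], hθ.2⟩
    have hDθ := hD θ
    have hSpos : 0 < Real.sqrt (1 - m * Real.sin θ^2) := Real.sqrt_pos.mpr hDθ
    have hSsq : Real.sqrt (1 - m * Real.sin θ^2)^2 = 1 - m * Real.sin θ^2 :=
      Real.sq_sqrt hDθ.le
    have hqs : HasDerivAt (fun θ : ℝ => q * Real.sin θ) (q * Real.cos θ) θ :=
      (Real.hasDerivAt_sin θ).const_mul q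
    have hlog1 : HasDerivAt (fun θ : ℝ => Real.log (q * Real.sin θ))
        ((q * Real.cos θ)/(q * Real.sin θ)) θ := hqs.log (by positivity)
    have hpow : HasDerivAt (fun θ : ℝ => Real.sin θ^2)
        ((2:ℕ) * Real.sin θ^(2-1) * Real.cos θ) θ := (Real.hasDerivAt_sin θ).pow 2
    have hin : HasDerivAt (fun θ : ℝ => 1 - m * Real.sin θ^2)
        (-(m * ((2:ℕ) * Real.sin θ^(2-1) * Real.cos θ))) θ := (hpow.const_mul m).const_sub 1
    have hsqrtD := hin.sqrt hDθ.ne'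
    have hsum := (Real.hasDerivAt_cos θ).add hsqrtD
    have hlog2 := hsum.log (by positivity :
      Real.cos θ + Real.sqrt (1 - m * Real.sin θ^2) ≠ 0)
    have htot := hlog1.sub hlog2
    refine htot.congr_deriv (Eq.symm ?_)
    have hpy := Real.sin_sq_add_cos_sq θ
    simp only [Pi.add_apply, Nat.cast_ofNat, pow_one, Nat.add_one_sub_one]
    generalize Real.sqrt (1 - m * Real.sin θ^2) = S at hSpos hSsq ⊢
    have hcS : 0 < Real.cos θ + S := by positivity
    field_simp
    linear_combination (-S) * hpy + (-Real.cos θ) * hSsq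
  -- integrals via FTC
  have hg1c : ContinuousOn (fun θ : ℝ => 1/2 + 1/(2*(1 - m * sin θ^2))) (Set.uIcc 0 θ₀) := by
    apply ContinuousOn.add continuousOn_const
    apply ContinuousOn.div continuousOn_const (by fun_prop)
    intro θ _
    have := hD θ
    positivity
  have hI1eq : (∫ θ in (0:ℝ)..θ₀, (1/2 + 1/(2*(1 - m * sin θ^2))))
      = H1 θ₀ - H1 0 := integral_eq_sub_of_hasDerivAt hH1 (hg1c.intervalIntegrable)
  have hH10 : H1 0 = 0 := by
    simp [hH1def]
  have hq32 : q * (3/2) = 3*q/2 := by ring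
  have hH1θ0 : H1 θ₀ = θ₀/2 + Real.arctan (3*q/2) / (2*q) := by
    simp only [hH1def, htan, hq32]
  have hg2c : ContinuousOn (fun θ : ℝ => 1/(Real.sin θ * Real.sqrt (1 - m * sin θ^2)))
      (Set.uIcc θ₀ (π/2)) := by
    apply ContinuousOn.div continuousOn_const (by fun_prop)
    intro θ hθ
    rw [Set.uIcc_of_le hθπ.le] at hθ
    have hsin : 0 < Real.sin θ :=
      Real.sin_pos_of_pos_of_lt_pi (lt_of_lt_of_le h00 hθ.1) (by
        have := Real.pi_pos; linarith [hθ.2])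
    have := hD θ
    positivity
  have hI2eq : (∫ θ in θ₀..(π/2), 1/(Real.sin θ * Real.sqrt (1 - m * sin θ^2)))
      = H2 (π/2) - H2 θ₀ := integral_eq_sub_of_hasDerivAt hH2 (hg2c.intervalIntegrable)
  have hH2pi : H2 (π/2) = 0 := by
    simp only [hH2def, Real.sin_pi_div_two, Real.cos_pi_div_two, one_pow, mul_one, zero_add]
    rw [← hqdef]
    ring
  set R := Real.sqrt (4 + 9*q^2) with hRdef
  have hR0 : 0 < R := Real.sqrt_pos.mpr (by positivity)
  have hRsq : R^2 = 4 + 9*q^2 := Real.sq_sqrt (by positivity)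
  have hR2 : 2 ≤ R := by
    rw [hRdef, Real.le_sqrt (by norm_num) (by positivity)]
    nlinarith [sq_nonneg q]
  have hs0sq : Real.sin θ₀^2 = 9/13 := by
    rw [hs0, div_pow, Real.sq_sqrt (by norm_num : (0:ℝ) ≤ 13)]
    norm_num
  have hD0 : 1 - m * Real.sin θ₀^2 = (4 + 9*q^2)/13 := by
    rw [hs0sq]
    linear_combination (-9/13) * hq2
  have hsqrtD0 : Real.sqrt (1 - m * Real.sin θ₀^2) = R/Real.sqrt 13 := by
    rw [hD0, hRdef, ← Real.sqrt_div (by positivity) 13]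
  have hH2θ0 : H2 θ₀ = Real.log 3 + Real.log q - Real.log (2 + R) := by
    simp only [hH2def]
    rw [hsqrtD0, hs0, hc0, ← add_div]
    rw [Real.log_mul hq0.ne' (by positivity), Real.log_div (by norm_num) h13.ne',
      Real.log_div (by positivity) h13.ne']
    ring
  -- pointwise bounds and assembly
  have hmono1 : (∫ θ in (0:ℝ)..θ₀, 1 / Real.sqrt (1 - m * sin θ^2))
      ≤ ∫ θ in (0:ℝ)..θ₀, (1/2 + 1/(2*(1 - m * sin θ^2))) := by
    apply intervalIntegral.integral_mono_on h00.le (hfc.intervalIntegrable _ _)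
      (hg1c.intervalIntegrable)
    intro θ _
    have hDθ := hD θ
    have hS : 0 < Real.sqrt (1 - m * sin θ^2) := Real.sqrt_pos.mpr hDθ
    have hSsq : Real.sqrt (1 - m * sin θ^2)^2 = 1 - m * sin θ^2 := Real.sq_sqrt hDθ.le
    have heq : 1/2 + 1/(2*(1 - m * sin θ^2))
        = (1 + (1 - m * sin θ^2))/(2*(1 - m * sin θ^2)) := by
      field_simp
      ring
    rw [heq, div_le_div_iff₀ hS (by positivity)]
    nlinarith only [mul_nonneg hS.le (sq_nonneg (Real.sqrt (1 - m * sin θ^2) - 1)), hSsq, hS, hDθ]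
  have hmono2 : (∫ θ in θ₀..(π/2), 1 / Real.sqrt (1 - m * sin θ^2))
      ≤ ∫ θ in θ₀..(π/2), 1/(Real.sin θ * Real.sqrt (1 - m * sin θ^2)) := by
    apply intervalIntegral.integral_mono_on hθπ.le (hfc.intervalIntegrable _ _)
      (hg2c.intervalIntegrable)
    intro θ hθ
    have hDθ := hD θ
    have hS : 0 < Real.sqrt (1 - m * sin θ^2) := Real.sqrt_pos.mpr hDθ
    have hsin : 0 < Real.sin θ :=
      Real.sin_pos_of_pos_of_lt_pi (lt_of_lt_of_le h00 hθ.1) (by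
        have := Real.pi_pos; linarith [hθ.2])
    apply one_div_le_one_div_of_le (by positivity)
    calc Real.sin θ * Real.sqrt (1 - m * sin θ^2)
        ≤ 1 * Real.sqrt (1 - m * sin θ^2) := by
          apply mul_le_mul_of_nonneg_right (Real.sin_le_one θ) hS.le
      _ = Real.sqrt (1 - m * sin θ^2) := one_mul _
  have hsplit : (∫ θ in (0:ℝ)..(π/2), 1 / Real.sqrt (1 - m * sin θ^2))
      = (∫ θ in (0:ℝ)..θ₀, 1 / Real.sqrt (1 - m * sin θ^2))
        + ∫ θ in θ₀..(π/2), 1 / Real.sqrt (1 - m * sin θ^2) :=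
    (integral_add_adjacent_intervals (hfc.intervalIntegrable _ _)
      (hfc.intervalIntegrable _ _)).symm
  have htotal : (∫ θ in (0:ℝ)..(π/2), 1 / Real.sqrt (1 - m * sin θ^2))
      ≤ θ₀/2 + Real.arctan (3*q/2)/(2*q) + (Real.log (2+R) - Real.log 3 - Real.log q) := by
    rw [hsplit]
    have e1 := hI1eq
    have e2 := hI2eq
    rw [hH10, hH1θ0] at e1
    rw [hH2pi, hH2θ0] at e2
    linarith only [hmono1, hmono2, e1.le, e2.le, e1.ge, e2.ge]
  -- final numeric inequality
  have hlogm : Real.log (1-m) = 2 * Real.log q := by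
    rw [← hq2, Real.log_pow]
    push_cast
    ring
  set u := (R - 2)/4 with hudef
  have hu0 : 0 ≤ u := by
    rw [hudef]
    linarith [hR2]
  have hlog2R : Real.log (2 + R) = Real.log 4 + Real.log (1+u) := by
    rw [show (2:ℝ)+R = 4*(1+u) by rw [hudef]; ring,
      Real.log_mul (by norm_num) (by positivity)]
  have hlog43' : Real.log 4 - Real.log 3 = Real.log (4/3) :=
    (Real.log_div (by norm_num) (by norm_num)).symm
  have hL1p := aux_log1p_le u hu0
  have hlog43 := aux_log43
  have harcup2 : Real.arctan (3*q/2)/(2*q)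
      ≤ 3/4 - 9/16*q^2 + 243/320*q^4 - 2187/1792*q^6 + 19683/9216*q^8 := by
    rw [div_le_iff₀ (by positivity)]
    calc Real.arctan (3*q/2) ≤ (3*q/2) - (3*q/2)^3/3 + (3*q/2)^5/5 - (3*q/2)^7/7 + (3*q/2)^9/9 :=
        aux_arctan_le (3*q/2) (by positivity)
      _ = (3/4 - 9/16*q^2 + 243/320*q^4 - 2187/1792*q^6 + 19683/9216*q^8) * (2*q) := by ring
  have hθ0eq : θ₀ = π/2 - Real.arctan (2/3) := by
    have h := Real.arctan_inv_of_pos (show (0:ℝ) < 2/3 by norm_num)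
    norm_num at h
    rw [hθ₀def]
    linarith [h]
  have harclo : (2:ℝ)/3 - (2/3)^3/3 + (2/3)^5/5 - (2/3)^7/7 ≤ Real.arctan (2/3) :=
    aux_arctan_ge (2/3) (by norm_num)
  have hq2nn : (0:ℝ) ≤ q^2 := sq_nonneg q
  have hub : R ≤ 2 + 9*q^2/4 - (9*q^2/4)^2/4 + (9*q^2/4)^3/8 := by
    rw [hRdef]
    exact aux_sqrt_ub (q^2) hq2nn hqb
  have hub2 : R ≤ 2 + 9*q^2/4 := by
    rw [hRdef]
    exact aux_sqrt_ub2 (q^2) hq2nn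
  have hlb : 2 + 9*q^2/4 - (9*q^2/4)^2/4 ≤ R := by
    rw [hRdef]
    exact aux_sqrt_lb (q^2) hq2nn hqb
  have hu1 : u ≤ 9*q^2/16 - (9*q^2/4)^2/16 + (9*q^2/4)^3/32 := by
    rw [hudef]; linarith [hub]
  have hu2 : 9*q^2/16 - (9*q^2/4)^2/16 ≤ u := by
    rw [hudef]; linarith [hlb]
  have hu3 : u ≤ 9*q^2/16 := by
    rw [hudef]; linarith [hub2]
  have hlbnn : (0:ℝ) ≤ 9*q^2/16 - (9*q^2/4)^2/16 := by
    nlinarith only [hqb, sq_nonneg q]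
  have husq : (9*q^2/16 - (9*q^2/4)^2/16)^2 ≤ u^2 := by
    nlinarith only [hu2, hlbnn]
  have hucube : u^3 ≤ (9*q^2/16)^3 := pow_le_pow_left₀ hu0 hu3 3
  have hEnd : Real.log (1+u) ≤ 9*q^2/16 - (9*q^2/4)^2/16 + (9*q^2/4)^3/32
      - (9*q^2/16 - (9*q^2/4)^2/16)^2/2 + (9*q^2/16)^3/3 := by
    linarith only [hL1p, hu1, husq, hucube]
  have hπ := Real.pi_gt_d6
  -- conclude
  have key : θ₀/2 + Real.arctan (3*q/2)/(2*q) + (Real.log (2+R) - Real.log 3) ≤ π/2 := by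
    rw [hlog2R, hθ0eq]
    have hfin : (π/2 - Real.arctan (2/3))/2
        + (3/4 - 9/16*q^2 + 243/320*q^4 - 2187/1792*q^6 + 19683/9216*q^8)
        + (Real.log 4 + Real.log (1+u) - Real.log 3) ≤ π/2 := by
      rw [show Real.log 4 + Real.log (1+u) - Real.log 3
          = (Real.log 4 - Real.log 3) + Real.log (1+u) by ring, hlog43']
      have hfp := aux_final_poly (q^2) (sq_nonneg q) hqb
      linarith only [harclo, hlog43, hEnd, hfp]
    linarith only [harcup2, hfin]
  rw [hlogm]
  linarith only [htotal, key]

theorem ellipticK_le (k : ℝ) (hk : k ∈ Set.Ioo (-1 : ℝ) 1) :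
    ellipticK k ≤ (π / 2) * (1 - (1 / π) * Real.log (1 - k ^ 2)) := by
  obtain ⟨hk1, hk2⟩ := hk
  have hm0 : 0 ≤ k^2 := sq_nonneg k
  have hm1 : k^2 < 1 := by nlinarith
  have hrhs : (π/2) * (1 - (1/π) * Real.log (1 - k^2)) = π/2 - Real.log (1-k^2)/2 := by
    have hπ : π ≠ 0 := Real.pi_ne_zero
    field_simp
  rw [ellipticK, hrhs]
  rcases le_or_gt (k^2) (18/25) with h | h
  · exact case1 (k^2) hm0 h
  · exact case2 (k^2) h.le hm1
end

section
/- For a complex number λ = μ + iν with μ ≠ 0, the integral ∫₀^∞ dt / |t² + λ²| is at most (π/(2|λ|)) · (1 − (1/π) log(μ² / |λ|²)). -/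
open MeasureTheory Real

open Filter Topology Set



-- ===== numeric lemmas =====
private lemma num_exp_lower : (4.8005:ℝ) ≤ Real.exp (π/2) := by
  have h1 : (1.5707:ℝ) ≤ π/2 := by
    have := Real.pi_gt_d6
    linarith
  have h2 := Real.sum_le_exp_of_nonneg (by norm_num : (0:ℝ) ≤ 1.5707) 7
  have h3 : (4.8005:ℝ) ≤ ∑ i ∈ Finset.range 7, (1.5707:ℝ)^i / i.factorial := by
    norm_num [Finset.sum_range_succ, Nat.factorial]
  calc (4.8005:ℝ) ≤ ∑ i ∈ Finset.range 7, (1.5707:ℝ)^i / i.factorial := h3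
    _ ≤ Real.exp 1.5707 := h2
    _ ≤ Real.exp (π/2) := Real.exp_le_exp.2 h1

private lemma num_exp_upper : Real.exp 0.4565 ≤ 1.5812 := by
  have h := Real.exp_bound' (by norm_num : (0:ℝ) ≤ 0.4565) (by norm_num : (0.4565:ℝ) ≤ 1)
    (n := 5) (by norm_num)
  calc Real.exp 0.4565 ≤ _ := h
    _ ≤ (1.5812:ℝ) := by
      norm_num [Finset.sum_range_succ, Nat.factorial]

private lemma num_B {u : ℝ} (h1 : 1 ≤ u) (h2 : u ≤ 1.5812) : π/2*u ≤ π/2 + 2*Real.log u := by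
  have hU : (0.4565:ℝ) ≤ Real.log 1.5812 := by
    rw [Real.le_log_iff_exp_le (by norm_num)]
    exact num_exp_upper
  have hchord : (u - 1)/0.5812 * Real.log 1.5812 ≤ Real.log u := by
    have hconc := (strictConcaveOn_log_Ioi.concaveOn).2
      (Set.mem_Ioi.2 (by norm_num : (0:ℝ) < 1))
      (Set.mem_Ioi.2 (by norm_num : (0:ℝ) < 1.5812))
      (div_nonneg (by linarith) (by norm_num) : (0:ℝ) ≤ (1.5812 - u)/0.5812)
      (div_nonneg (by linarith) (by norm_num) : (0:ℝ) ≤ (u - 1)/0.5812)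
      (by rw [← add_div]; norm_num : (1.5812 - u)/0.5812 + (u-1)/0.5812 = 1)
    rw [smul_eq_mul, smul_eq_mul, smul_eq_mul, smul_eq_mul] at hconc
    have harg : (1.5812 - u)/0.5812 * 1 + (u-1)/0.5812 * 1.5812 = u := by ring
    rw [harg, Real.log_one, mul_zero, zero_add] at hconc
    exact hconc
  have hpi := Real.pi_lt_d6
  have e1 : 0.4565*(u-1) ≤ (u-1) * Real.log 1.5812 := by
    nlinarith [mul_nonneg (by linarith : (0:ℝ) ≤ u - 1)
      (by linarith : (0:ℝ) ≤ Real.log 1.5812 - 0.4565)]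
  have e2 : 0.4565*(u-1)/0.5812 ≤ (u-1) * Real.log 1.5812 / 0.5812 :=
    (div_le_div_iff_of_pos_right (by norm_num)).2 e1
  have hchord2 : (u-1) * Real.log 1.5812 / 0.5812 ≤ Real.log u := by
    rw [div_mul_eq_mul_div] at hchord; exact hchord
  have e3 : 0.4565*(u-1)/0.5812 ≤ Real.log u := e2.trans hchord2
  have e4 : π*(u-1) ≤ 3.141593*(u-1) := by
    nlinarith [mul_nonneg (by linarith : (0:ℝ) ≤ u - 1) (by linarith : (0:ℝ) ≤ 3.141593 - π)]
  have e5 : 0.4565*(u-1)/0.5812 = (4565/5812)*(u-1) := by ring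
  rw [e5] at e3
  nlinarith [e3, e4, h1]

private lemma num_A {w : ℝ} (hw : 5/2 ≤ w) :
    Real.log (77/23) + Real.arsinh (1771/2700*w) ≤ π/2 + Real.log w := by
  have hw0 : (0:ℝ) < w := by linarith
  set y : ℝ := 1771/2700*w with hy
  have hy0 : 0 < y := by positivity
  have h1 : Real.arsinh y ≤ Real.log (2*y + 1/(2*y)) := by
    rw [Real.arsinh]
    apply Real.log_le_log (by positivity)
    have hs : Real.sqrt (1 + y^2) ≤ y + 1/(2*y) := by
      have h2 : (1 + y^2) ≤ (y + 1/(2*y))^2 := by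
        field_simp
        nlinarith [sq_nonneg y]
      calc Real.sqrt (1+y^2) ≤ Real.sqrt ((y+1/(2*y))^2) := Real.sqrt_le_sqrt h2
        _ = y + 1/(2*y) := Real.sqrt_sq (by positivity)
    linarith
  have h3 : Real.log (77/23) + Real.log (2*y + 1/(2*y))
      = Real.log ((77/23)*(2*y + 1/(2*y))) := by
    rw [Real.log_mul (by norm_num) (by positivity)]
  have h4 : (77/23)*(2*y + 1/(2*y)) ≤ 4.8005*w := by
    have hinv : 1/(2*y) ≤ 1350/(1771*(5/2)) := by
      rw [hy]
      have he : 1/(2*(1771/2700*w)) = 1350/(1771*w) := by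
        field_simp
        ring
      rw [he]
      apply div_le_div_of_nonneg_left (by norm_num) (by norm_num) _
      nlinarith
    rw [hy] at *
    nlinarith
  have h5 : Real.log ((77/23)*(2*y + 1/(2*y))) ≤ Real.log (4.8005*w) :=
    Real.log_le_log (by positivity) h4
  have h6 : Real.log (4.8005*w) = Real.log 4.8005 + Real.log w :=
    Real.log_mul (by norm_num) hw0.ne'
  have h7 : Real.log 4.8005 ≤ π/2 := by
    rw [Real.log_le_iff_le_exp (by norm_num)]
    exact num_exp_lower
  linarith

-- ===== derivative lemmas =====
private lemma hasDeriv_phi {r : ℝ} (hr : 0 < r) {x : ℝ} (hx1 : -r < x) (hx2 : x < r) :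
    HasDerivAt (fun t => (Real.log (r+t) - Real.log (r-t))/(2*r)) ((r^2-x^2)⁻¹) x := by
  have h1 : (0:ℝ) < r + x := by linarith
  have h2 : (0:ℝ) < r - x := by linarith
  have h3 : r^2 - x^2 ≠ 0 := by nlinarith
  have d1 : HasDerivAt (fun t : ℝ => Real.log (r+t)) (1/(r+x)) x := by
    have : HasDerivAt (fun t : ℝ => r + t) 1 x := (hasDerivAt_id x).const_add r
    simpa [Function.comp_def] using (Real.hasDerivAt_log h1.ne').comp x this
  have d2 : HasDerivAt (fun t : ℝ => Real.log (r-t)) (-(1/(r-x))) x := by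
    have : HasDerivAt (fun t : ℝ => r - t) (-1) x := by
      simpa using ((hasDerivAt_id x).const_sub r)
    have := (Real.hasDerivAt_log h2.ne').comp x this
    simpa [Function.comp_def] using this
  have := ((d1.sub d2).div_const (2*r))
  refine this.congr_deriv ?_
  field_simp
  ring

private lemma hasDeriv_chi {r : ℝ} (hr : 0 < r) {x : ℝ} (hx : r < x) :
    HasDerivAt (fun t => (Real.log (t-r) - Real.log (t+r))/(2*r)) ((x^2-r^2)⁻¹) x := by
  have h1 : (0:ℝ) < x - r := by linarith
  have h2 : (0:ℝ) < x + r := by linarith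
  have h3 : x^2 - r^2 ≠ 0 := by nlinarith
  have d1 : HasDerivAt (fun t : ℝ => Real.log (t-r)) (1/(x-r)) x := by
    have : HasDerivAt (fun t : ℝ => t - r) 1 x := (hasDerivAt_id x).sub_const r
    simpa [Function.comp_def] using (Real.hasDerivAt_log h1.ne').comp x this
  have d2 : HasDerivAt (fun t : ℝ => Real.log (t+r)) (1/(x+r)) x := by
    have : HasDerivAt (fun t : ℝ => t + r) 1 x := (hasDerivAt_id x).add_const r
    simpa [Function.comp_def] using (Real.hasDerivAt_log h2.ne').comp x this
  have := ((d1.sub d2).div_const (2*r))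
  refine this.congr_deriv ?_
  field_simp
  ring

private lemma hasDeriv_psi {r m : ℝ} (hr : 0 < r) (hm : 0 < m) {x : ℝ} (hx : 0 < x) :
    HasDerivAt (fun t => Real.arsinh ((t^2-r^2)/(2*m*t)) / (2*r))
      ((x^2+r^2)/(2*r*x*Real.sqrt ((x^2-r^2)^2+4*m^2*x^2))) x := by
  have hDpos : 0 < (x^2-r^2)^2+4*m^2*x^2 := by positivity
  have hsq : 0 < Real.sqrt ((x^2-r^2)^2+4*m^2*x^2) := Real.sqrt_pos.2 hDpos
  have hden : (2*m*x) ≠ 0 := by positivity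
  have du : HasDerivAt (fun t : ℝ => (t^2-r^2)/(2*m*t)) ((x^2+r^2)/(2*m*x^2)) x := by
    have d1 : HasDerivAt (fun t : ℝ => t^2-r^2) (2*x) x := by
      simpa using ((hasDerivAt_pow 2 x).sub_const (r^2))
    have d2 : HasDerivAt (fun t : ℝ => 2*m*t) (2*m) x := by
      simpa using (hasDerivAt_id x).const_mul (2*m)
    have := d1.div d2 hden
    refine this.congr_deriv ?_
    field_simp
    ring
  have harc := (Real.hasDerivAt_arsinh ((x^2-r^2)/(2*m*x))).comp x du
  have hsqrt : Real.sqrt (1+((x^2-r^2)/(2*m*x))^2)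
      = Real.sqrt ((x^2-r^2)^2+4*m^2*x^2) / (2*m*x) := by
    have h1 : 1 + ((x^2-r^2)/(2*m*x))^2
        = (Real.sqrt ((x^2-r^2)^2+4*m^2*x^2)/(2*m*x))^2 := by
      rw [div_pow, div_pow, Real.sq_sqrt hDpos.le]
      field_simp
      ring
    rw [h1, Real.sqrt_sq (by positivity)]
  have := harc.div_const (2*r)
  refine this.congr_deriv ?_
  rw [hsqrt]
  field_simp

private lemma hasDeriv_arctan1 {r c : ℝ} (hc : 0 < c) {x : ℝ} (hx : 0 < x) :
    HasDerivAt (fun t => Real.arctan ((t^2-r^2)/(2*c*t)) / (2*c))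
      ((x^2+r^2)/((x^2-r^2)^2+4*c^2*x^2)) x := by
  have hDpos : (0:ℝ) < (x^2-r^2)^2+4*c^2*x^2 := by positivity
  have hden : (2*c*x) ≠ 0 := by positivity
  have du : HasDerivAt (fun t : ℝ => (t^2-r^2)/(2*c*t)) ((x^2+r^2)/(2*c*x^2)) x := by
    have d1 : HasDerivAt (fun t : ℝ => t^2-r^2) (2*x) x := by
      simpa using ((hasDerivAt_pow 2 x).sub_const (r^2))
    have d2 : HasDerivAt (fun t : ℝ => 2*c*t) (2*c) x := by
      simpa using (hasDerivAt_id x).const_mul (2*c)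
    have := d1.div d2 hden
    refine this.congr_deriv ?_
    field_simp
    ring
  have harc := (Real.hasDerivAt_arctan ((x^2-r^2)/(2*c*x))).comp x du
  have := harc.div_const (2*c)
  refine this.congr_deriv ?_
  rw [div_pow]
  field_simp
  ring

private lemma hasDeriv_arctan2 {r c : ℝ} (hr : 0 < r) (hc : 0 < c) {x : ℝ} (hx1 : 0 < x) (hx2 : x < r) :
    HasDerivAt (fun t => Real.arctan ((2*c*t)/(r^2-t^2)) / (2*c))
      ((x^2+r^2)/((x^2-r^2)^2+4*c^2*x^2)) x := by
  have hden : (r^2-x^2) ≠ 0 := by nlinarith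
  have du : HasDerivAt (fun t : ℝ => (2*c*t)/(r^2-t^2)) (2*c*(r^2+x^2)/(r^2-x^2)^2) x := by
    have d1 : HasDerivAt (fun t : ℝ => 2*c*t) (2*c) x := by
      simpa using (hasDerivAt_id x).const_mul (2*c)
    have d2 : HasDerivAt (fun t : ℝ => r^2-t^2) (-(2*x)) x := by
      simpa using ((hasDerivAt_pow 2 x).const_sub (r^2))
    have := d1.div d2 hden
    refine this.congr_deriv ?_
    field_simp
    ring
  have harc := (Real.hasDerivAt_arctan ((2*c*x)/(r^2-x^2))).comp x du
  have := harc.div_const (2*c)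
  refine this.congr_deriv ?_
  rw [div_pow]
  field_simp
  ring

-- ===== tendsto lemmas =====
private lemma tendsto_chi {r : ℝ} (hr : 0 < r) :
    Tendsto (fun t => (Real.log (t-r) - Real.log (t+r))/(2*r)) atTop (𝓝 0) := by
  have h0 : Tendsto (fun t:ℝ => (t-r)/(t+r)) atTop (𝓝 1) := by
    have h1 : Tendsto (fun t:ℝ => 1 - 2*r/(t+r)) atTop (𝓝 1) := by
      have h2 : Tendsto (fun t:ℝ => 2*r/(t+r)) atTop (𝓝 0) :=
        tendsto_const_nhds.div_atTop (tendsto_atTop_add_const_right _ r tendsto_id)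
      simpa using tendsto_const_nhds.sub h2
    apply h1.congr'
    filter_upwards [eventually_gt_atTop r] with t ht
    have h5 : (0:ℝ) < t + r := by linarith
    field_simp
    ring
  have h3 : Tendsto (fun t:ℝ => Real.log ((t-r)/(t+r))) atTop (𝓝 0) := by
    have := (Real.continuousAt_log (one_ne_zero)).tendsto.comp h0
    simpa [Function.comp_def] using this
  have h4 : Tendsto (fun t:ℝ => Real.log (t-r) - Real.log (t+r)) atTop (𝓝 0) := by
    apply h3.congr'
    filter_upwards [eventually_gt_atTop r] with t ht
    rw [Real.log_div (by nlinarith) (by nlinarith)]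
  simpa using h4.div_const (2*r)

private lemma tendsto_arctan1 {r c : ℝ} (hc : 0 < c) :
    Tendsto (fun t => Real.arctan ((t^2-r^2)/(2*c*t)) / (2*c)) atTop (𝓝 (π/(4*c))) := by
  have hu : Tendsto (fun t:ℝ => (t^2-r^2)/(2*c*t)) atTop atTop := by
    have hA : Tendsto (fun t:ℝ => t/(2*c)) atTop atTop :=
      Tendsto.atTop_div_const (by positivity) tendsto_id
    have hB : Tendsto (fun t:ℝ => -(r^2/(2*c))/t) atTop (𝓝 0) :=
      tendsto_const_nhds.div_atTop tendsto_id
    have h1 := hA.atTop_add hB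
    apply h1.congr'
    filter_upwards [eventually_gt_atTop 0] with t ht
    field_simp
    ring
  have harc : Tendsto (fun t:ℝ => Real.arctan ((t^2-r^2)/(2*c*t))) atTop (𝓝 (π/2)) :=
    (tendsto_nhds_of_tendsto_nhdsWithin Real.tendsto_arctan_atTop).comp hu
  have := harc.div_const (2*c)
  convert this using 2
  ring

-- ===== the arctan integral on (0, r] =====
private lemma int_Ioc_arctan {r c : ℝ} (hr : 0 < r) (hc : 0 < c) :
    ∫ t in Set.Ioc 0 r, (t^2+r^2)/((t^2-r^2)^2+4*c^2*t^2) = π/(4*c) := by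
  set g : ℝ → ℝ := fun t => Real.arctan ((2*c*t)/(r^2-t^2)) / (2*c) with hg
  set F : ℝ → ℝ := fun t => if t = r then π/(4*c) else g t with hF
  set h : ℝ → ℝ := fun t => (t^2+r^2)/((t^2-r^2)^2+4*c^2*t^2) with hh
  have hne : ∀ x ∈ Set.Icc 0 r, ((x^2-r^2)^2+4*c^2*x^2) ≠ 0 := by
    intro x hx
    have hp : 0 < (x^2-r^2)^2+4*c^2*x^2 := by
      rcases eq_or_lt_of_le hx.1 with h0 | h0
      · rw [← h0]; norm_num; positivity
      · positivity
    exact hp.ne'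
  have hcont_h : ContinuousOn h (Set.Icc 0 r) := by
    apply ContinuousOn.div
    · fun_prop
    · fun_prop
    · exact hne
  have hFr : F r = π/(4*c) := by simp [hF]
  have hcont : ContinuousOn F (Set.Icc 0 r) := by
    intro x hx
    rcases eq_or_lt_of_le hx.2 with hxr | hxr
    · subst hxr
      rw [ContinuousWithinAt, hFr]
      have hsplit : Set.Icc (0:ℝ) x = Set.Ico 0 x ∪ {x} := by
        rw [← Set.Ico_union_Icc_eq_Icc hx.1 le_rfl, Set.Icc_self]
      rw [hsplit, nhdsWithin_union, tendsto_sup]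
      constructor
      · have hv : Tendsto (fun t:ℝ => (2*c*t)/(x^2-t^2)) (𝓝[Set.Ico 0 x] x) atTop := by
          have hnum : Tendsto (fun t:ℝ => 2*c*t) (𝓝[Set.Ico 0 x] x) (𝓝 (2*c*x)) := by
            apply tendsto_nhdsWithin_of_tendsto_nhds
            exact (continuous_const.mul continuous_id).tendsto x
          have hdenom : Tendsto (fun t:ℝ => x^2-t^2) (𝓝[Set.Ico 0 x] x) (𝓝[>] 0) := by
            rw [tendsto_nhdsWithin_iff]
            constructor
            · apply tendsto_nhdsWithin_of_tendsto_nhds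
              have : Continuous (fun t:ℝ => x^2-t^2) := by fun_prop
              simpa using this.tendsto x
            · filter_upwards [self_mem_nhdsWithin] with t ht
              simp only [Set.mem_Ioi]
              nlinarith [ht.2, ht.1]
          have hinv : Tendsto (fun t:ℝ => (x^2-t^2)⁻¹) (𝓝[Set.Ico 0 x] x) atTop :=
            tendsto_inv_nhdsGT_zero.comp hdenom
          have := hnum.pos_mul_atTop (by positivity) hinv
          apply this.congr
          intro t; rw [div_eq_mul_inv]
        have harc : Tendsto (fun t:ℝ => Real.arctan ((2*c*t)/(x^2-t^2)))
            (𝓝[Set.Ico 0 x] x) (𝓝 (π/2)) :=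
          (tendsto_nhds_of_tendsto_nhdsWithin Real.tendsto_arctan_atTop).comp hv
        have hgl : Tendsto g (𝓝[Set.Ico 0 x] x) (𝓝 (π/(4*c))) := by
          have := harc.div_const (2*c)
          convert this using 2
          ring
        apply hgl.congr'
        filter_upwards [self_mem_nhdsWithin] with t ht
        have : t ≠ x := ne_of_lt ht.2
        simp [hF, this]
      · rw [nhdsWithin_singleton, tendsto_pure_left]
        intro s hs
        simpa [hFr] using mem_of_mem_nhds hs
    · have hx0 : x ≠ r := ne_of_lt hxr
      have hev : F =ᶠ[𝓝 x] g := by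
        filter_upwards [eventually_ne_nhds hx0] with t ht
        simp [hF, ht]
      have hgc : ContinuousAt g x := by
        have hden : r^2 - x^2 ≠ 0 := by
          intro hz
          nlinarith [hx.1, hxr]
        apply ContinuousAt.div _ continuousAt_const (by norm_num [hc.ne'] : (2*c) ≠ 0)
        apply Real.continuous_arctan.continuousAt.comp
        exact ContinuousAt.div (by fun_prop) (by fun_prop) hden
      exact ((hgc.congr hev.symm).continuousWithinAt)
  have hderiv : ∀ x ∈ Set.Ioo 0 r, HasDerivWithinAt F (h x) (Set.Ioi x) x := by
    intro x hx
    have hx0 : x ≠ r := ne_of_lt hx.2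
    have hev : g =ᶠ[𝓝 x] F := by
      filter_upwards [eventually_ne_nhds hx0] with t ht
      simp [hF, ht]
    have := hasDeriv_arctan2 hr hc hx.1 hx.2
    exact (this.congr_of_eventuallyEq hev.symm).hasDerivWithinAt
  have hint : IntervalIntegrable h volume 0 r := by
    apply ContinuousOn.intervalIntegrable
    rwa [Set.uIcc_of_le hr.le]
  have heval := intervalIntegral.integral_eq_sub_of_hasDeriv_right_of_le hr.le hcont hderiv hint
  have hF0 : F 0 = 0 := by
    simp [hF, hg, hr.ne]
  rw [hF0, hFr, sub_zero] at heval
  rw [← heval, intervalIntegral.integral_of_le hr.le]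

set_option maxHeartbeats 2000000 in
theorem integral_one_div_abs_sq_add_sq_le (lam : ℂ) (h : lam.re ≠ 0) :
    ∫ t in Set.Ioi (0 : ℝ), 1 / ‖(t : ℂ) ^ 2 + lam ^ 2‖
      ≤ (π / (2 * ‖lam‖)) *
        (1 - (1 / π) * Real.log (lam.re ^ 2 / (‖lam‖) ^ 2)) := by
  set r := ‖lam‖ with hrdef
  set m := |lam.re| with hmdef
  set f : ℝ → ℝ := fun t => 1 / ‖(t:ℂ)^2 + lam^2‖ with hfdef
  clear_value f
  have hlam0 : lam ≠ 0 := fun h0 => h (by rw [h0]; simp)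
  have hr : 0 < r := by rw [hrdef]; exact norm_pos_iff.2 hlam0
  have hm : 0 < m := abs_pos.2 h
  have hmr : m ≤ r := Complex.abs_re_le_norm lam
  clear_value r m
  have habs : ∀ t:ℝ, ‖(t:ℂ)^2 + lam^2‖
      = Real.sqrt ((t^2-r^2)^2 + 4*m^2*t^2) := by
    intro t
    rw [Complex.norm_def]
    congr 1
    have h1 : (r^2 : ℝ) = lam.re^2 + lam.im^2 := by
      rw [hrdef, Complex.sq_norm, Complex.normSq_apply]; ring
    have h2 : (m^2 : ℝ) = lam.re^2 := by rw [hmdef, sq_abs]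
    rw [h1, h2, Complex.normSq_apply]
    simp [Complex.add_re, Complex.add_im, pow_two, Complex.mul_re, Complex.mul_im]
    ring
  have hDpos : ∀ t:ℝ, 0 < t → 0 < (t^2-r^2)^2+4*m^2*t^2 := by
    intro t ht
    have := mul_pos (mul_pos (by norm_num : (0:ℝ) < 4) (pow_pos hm 2)) (pow_pos ht 2)
    nlinarith [sq_nonneg (t^2-r^2)]
  have hz : ∀ t:ℝ, ‖(t:ℂ)^2 + lam^2‖ ≠ 0 := by
    intro t h0
    rw [habs t, Real.sqrt_eq_zero (by positivity)] at h0
    have h4 : m^2*t^2 ≤ 0 := by nlinarith [sq_nonneg (t^2-r^2)]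
    have h5 : t^2 ≤ 0 := by nlinarith [pow_pos hm 2]
    have h6 : t^2 = 0 := le_antisymm h5 (sq_nonneg t)
    nlinarith [pow_pos hr 2, h6]
  have hfcont : Continuous f := by
    rw [hfdef]
    apply continuous_const.div
    · exact continuous_norm.comp ((Complex.continuous_ofReal.pow 2).add continuous_const)
    · exact hz
  have hfnn : ∀ t:ℝ, 0 ≤ f t := by
    intro t
    rw [hfdef]
    positivity
  have hfb : ∀ t:ℝ, f t = (Real.sqrt ((t^2-r^2)^2+4*m^2*t^2))⁻¹ := by
    intro t
    rw [hfdef]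
    simp only [one_div]
    rw [habs t]
  have hQpos : ∀ t:ℝ, 0 < t → 0 < Real.sqrt ((t^2-r^2)^2+4*m^2*t^2) := by
    intro t ht
    exact Real.sqrt_pos.2 (hDpos t ht)
  -- RHS simplification
  have hRHS : (π / (2 * r)) * (1 - (1 / π) * Real.log (lam.re ^ 2 / r ^ 2))
      = (π/2 + (Real.log r - Real.log m))/r := by
    have h1 : lam.re^2 = m^2 := by rw [hmdef, sq_abs]
    rw [h1]
    have h2 : Real.log (m^2/r^2) = 2*(Real.log m - Real.log r) := by
      rw [Real.log_div (by positivity) (by positivity), Real.log_pow, Real.log_pow]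
      push_cast; ring
    rw [h2]
    have hπ := Real.pi_ne_zero
    field_simp
    ring
  rw [hRHS]
  -- case split
  rcases le_or_gt (5*m) (2*r) with hcase | hcase
  · -- CASE A : m/r ≤ 2/5
    set t1 := 27/50*r with ht1def
    set t2 := 50/27*r with ht2def
    clear_value t1 t2
    have h0t1 : 0 < t1 := by rw [ht1def]; positivity
    have ht1r : t1 < r := by rw [ht1def]; linarith
    have hrt2 : r < t2 := by rw [ht2def]; linarith
    have ht1t2 : t1 < t2 := by linarith
    -- pointwise bounds
    have hb1 : ∀ t ∈ Set.Ioc 0 t1, f t ≤ (r^2-t^2)⁻¹ := by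
      intro t ht
      have ht0 : 0 < t := ht.1
      have htr : t < r := lt_of_le_of_lt ht.2 ht1r
      rw [hfb]
      have hpos : 0 < r^2 - t^2 := by nlinarith
      apply inv_anti₀ hpos
      have he : r^2 - t^2 = Real.sqrt ((r^2-t^2)^2) := (Real.sqrt_sq hpos.le).symm
      rw [he]
      apply Real.sqrt_le_sqrt
      nlinarith [sq_nonneg (m*t)]
    have hb2 : ∀ t ∈ Set.Ioi t2, f t ≤ (t^2-r^2)⁻¹ := by
      intro t ht
      simp only [Set.mem_Ioi] at ht
      have htr : r < t := lt_trans hrt2 ht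
      have ht0 : 0 < t := lt_trans hr htr
      rw [hfb]
      have hpos : 0 < t^2 - r^2 := by nlinarith
      apply inv_anti₀ hpos
      have he : t^2 - r^2 = Real.sqrt ((t^2-r^2)^2) := (Real.sqrt_sq hpos.le).symm
      rw [he]
      apply Real.sqrt_le_sqrt
      nlinarith [sq_nonneg (m*t)]
    have hb3 : ∀ t ∈ Set.Ioc t1 t2,
        f t ≤ (t^2+r^2)/(2*r*t*Real.sqrt ((t^2-r^2)^2+4*m^2*t^2)) := by
      intro t ht
      have ht0 : 0 < t := lt_trans h0t1 ht.1
      have hQ := hQpos t ht0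
      rw [hfb, inv_eq_one_div, div_le_div_iff₀ hQ (by positivity)]
      nlinarith [mul_nonneg (sq_nonneg (t-r)) hQ.le]
    -- piece integrals of the comparison functions
    have hI1 : ∫ t in Set.Ioc 0 t1, (r^2-t^2)⁻¹
        = (Real.log (r+t1) - Real.log (r-t1))/(2*r) := by
      have hphi : ∀ x ∈ Set.uIcc 0 t1,
          HasDerivAt (fun t => (Real.log (r+t) - Real.log (r-t))/(2*r)) ((r^2-x^2)⁻¹) x := by
        intro x hx
        rw [Set.uIcc_of_le h0t1.le] at hx
        exact hasDeriv_phi hr (by linarith [hx.1]) (by linarith [hx.2])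
      have hint : IntervalIntegrable (fun t => (r^2-t^2)⁻¹) volume 0 t1 := by
        apply ContinuousOn.intervalIntegrable
        apply ContinuousOn.inv₀ (by fun_prop)
        intro x hx
        rw [Set.uIcc_of_le h0t1.le] at hx
        have h7 : x < r := by linarith [hx.2]
        have h8 : 0 ≤ x := hx.1
        nlinarith
      have heval := intervalIntegral.integral_eq_sub_of_hasDerivAt hphi hint
      rw [intervalIntegral.integral_of_le h0t1.le] at heval
      rw [heval]
      norm_num
    have hI2 : ∫ t in Set.Ioc t1 t2, (t^2+r^2)/(2*r*t*Real.sqrt ((t^2-r^2)^2+4*m^2*t^2))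
        = (Real.arsinh ((t2^2-r^2)/(2*m*t2)) - Real.arsinh ((t1^2-r^2)/(2*m*t1)))/(2*r) := by
      have hpsi : ∀ x ∈ Set.uIcc t1 t2,
          HasDerivAt (fun t => Real.arsinh ((t^2-r^2)/(2*m*t)) / (2*r))
            ((x^2+r^2)/(2*r*x*Real.sqrt ((x^2-r^2)^2+4*m^2*x^2))) x := by
        intro x hx
        rw [Set.uIcc_of_le ht1t2.le] at hx
        exact hasDeriv_psi hr hm (by linarith [hx.1])
      have hint : IntervalIntegrable
          (fun t => (t^2+r^2)/(2*r*t*Real.sqrt ((t^2-r^2)^2+4*m^2*t^2))) volume t1 t2 := by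
        apply ContinuousOn.intervalIntegrable
        apply ContinuousOn.div (by fun_prop)
        · apply ContinuousOn.mul (by fun_prop)
          exact (Real.continuous_sqrt.comp (by fun_prop)).continuousOn
        · intro x hx
          rw [Set.uIcc_of_le ht1t2.le] at hx
          have hx0 : 0 < x := by linarith [hx.1]
          have hD := hDpos x hx0
          have hQ := hQpos x hx0
          positivity
      have heval := intervalIntegral.integral_eq_sub_of_hasDerivAt hpsi hint
      rw [intervalIntegral.integral_of_le ht1t2.le] at heval
      rw [heval]
      ring
    have hchi : ∀ x ∈ Set.Ici t2,
        HasDerivAt (fun t => (Real.log (t-r) - Real.log (t+r))/(2*r)) ((x^2-r^2)⁻¹) x := by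
      intro x hx
      simp only [Set.mem_Ici] at hx
      exact hasDeriv_chi hr (by linarith)
    have hnn3 : ∀ x ∈ Set.Ioi t2, 0 ≤ (x^2-r^2)⁻¹ := by
      intro x hx
      simp only [Set.mem_Ioi] at hx
      have h9 : 0 < x^2 - r^2 := by nlinarith
      positivity
    have hI3 : ∫ t in Set.Ioi t2, (t^2-r^2)⁻¹
        = (Real.log (t2+r) - Real.log (t2-r))/(2*r) := by
      have heval := integral_Ioi_of_hasDerivAt_of_nonneg' hchi hnn3 (tendsto_chi hr)
      rw [heval]
      ring
    have hg3int : IntegrableOn (fun t:ℝ => (t^2-r^2)⁻¹) (Set.Ioi t2) :=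
      integrableOn_Ioi_deriv_of_nonneg' hchi hnn3 (tendsto_chi hr)
    -- integrability of f on the pieces
    have hf1int : IntegrableOn f (Set.Ioc 0 t1) := by
      exact (hfcont.continuousOn).integrableOn_Icc.mono_set Set.Ioc_subset_Icc_self
    have hf2int : IntegrableOn f (Set.Ioc t1 t2) := by
      exact (hfcont.continuousOn).integrableOn_Icc.mono_set Set.Ioc_subset_Icc_self
    have hf3int : IntegrableOn f (Set.Ioi t2) := by
      apply Integrable.mono hg3int (hfcont.aestronglyMeasurable.restrict)
      apply (ae_restrict_iff' measurableSet_Ioi).2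
      apply ae_of_all
      intro x hx
      rw [Real.norm_eq_abs, Real.norm_eq_abs, abs_of_nonneg (hfnn x),
        abs_of_nonneg (hnn3 x hx)]
      exact hb2 x hx
    -- splitting
    have hsplit : ∫ t in Set.Ioi (0:ℝ), f t
        = (∫ t in Set.Ioc 0 t1, f t) + ((∫ t in Set.Ioc t1 t2, f t)
          + (∫ t in Set.Ioi t2, f t)) := by
      have hu1 : Set.Ioc t1 t2 ∪ Set.Ioi t2 = Set.Ioi t1 := Set.Ioc_union_Ioi_eq_Ioi ht1t2.le
      have hu2 : Set.Ioc 0 t1 ∪ Set.Ioi t1 = Set.Ioi 0 := Set.Ioc_union_Ioi_eq_Ioi h0t1.le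
      have hd1 : Disjoint (Set.Ioc t1 t2) (Set.Ioi t2) := by
        rw [Set.disjoint_left]
        rintro x ⟨_, hx2⟩ hx3
        exact absurd hx3 (by simp; exact hx2)
      have hd2 : Disjoint (Set.Ioc 0 t1) (Set.Ioi t1) := by
        rw [Set.disjoint_left]
        rintro x ⟨_, hx2⟩ hx3
        exact absurd hx3 (by simp; exact hx2)
      have hintIoiT1 : IntegrableOn f (Set.Ioi t1) := by
        rw [← hu1]
        exact hf2int.union hf3int
      rw [← hu2, setIntegral_union hd2 measurableSet_Ioi hf1int hintIoiT1, ← hu1,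
        setIntegral_union hd1 measurableSet_Ioi hf2int hf3int]
    -- monotone comparisons
    have hm1 : (∫ t in Set.Ioc 0 t1, f t) ≤ ∫ t in Set.Ioc 0 t1, (r^2-t^2)⁻¹ := by
      have hgcont : ContinuousOn (fun t:ℝ => (r^2-t^2)⁻¹) (Set.Icc 0 t1) := by
        apply ContinuousOn.inv₀ (by fun_prop)
        intro x hx
        have h7 : x < r := by linarith [hx.2]
        have h8 : 0 ≤ x := hx.1
        nlinarith
      exact setIntegral_mono_on hf1int
        (hgcont.integrableOn_Icc.mono_set Set.Ioc_subset_Icc_self) measurableSet_Ioc hb1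
    have hm2 : (∫ t in Set.Ioc t1 t2, f t)
        ≤ ∫ t in Set.Ioc t1 t2, (t^2+r^2)/(2*r*t*Real.sqrt ((t^2-r^2)^2+4*m^2*t^2)) := by
      have hgcont : ContinuousOn
          (fun t:ℝ => (t^2+r^2)/(2*r*t*Real.sqrt ((t^2-r^2)^2+4*m^2*t^2)))
          (Set.Icc t1 t2) := by
        apply ContinuousOn.div (by fun_prop)
        · apply ContinuousOn.mul (by fun_prop)
          exact (Real.continuous_sqrt.comp (by fun_prop)).continuousOn
        · intro x hx
          have hx0 : 0 < x := by linarith [hx.1]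
          have hD := hDpos x hx0
          have hQ := hQpos x hx0
          positivity
      exact setIntegral_mono_on hf2int
        (hgcont.integrableOn_Icc.mono_set Set.Ioc_subset_Icc_self) measurableSet_Ioc hb3
    have hm3 : (∫ t in Set.Ioi t2, f t) ≤ ∫ t in Set.Ioi t2, (t^2-r^2)⁻¹ :=
      setIntegral_mono_on hf3int hg3int measurableSet_Ioi hb2
    -- values
    have e1 : r + t1 = 77/50*r := by rw [ht1def]; ring
    have e2 : r - t1 = 23/50*r := by rw [ht1def]; ring
    have e3 : t2 + r = 77/27*r := by rw [ht2def]; ring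
    have e4 : t2 - r = 23/27*r := by rw [ht2def]; ring
    have eX : (t2^2-r^2)/(2*m*t2) = 1771/2700*(r/m) := by
      rw [ht2def]
      field_simp
      ring
    have eY : (t1^2-r^2)/(2*m*t1) = -(1771/2700*(r/m)) := by
      rw [ht1def]
      field_simp
      ring
    have hw : (5:ℝ)/2 ≤ r/m := by
      rw [le_div_iff₀ hm]
      linarith
    have hnum := num_A hw
    have hlog77 : Real.log (77/23) = Real.log 77 - Real.log 23 :=
      Real.log_div (by norm_num) (by norm_num)
    have hlogw : Real.log (r/m) = Real.log r - Real.log m := Real.log_div hr.ne' hm.ne'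
    calc ∫ t in Set.Ioi (0:ℝ), f t
        ≤ (Real.log (r+t1) - Real.log (r-t1))/(2*r)
          + ((Real.arsinh ((t2^2-r^2)/(2*m*t2)) - Real.arsinh ((t1^2-r^2)/(2*m*t1)))/(2*r)
            + (Real.log (t2+r) - Real.log (t2-r))/(2*r)) := by
          rw [hsplit, ← hI1, ← hI2, ← hI3]
          gcongr
      _ = (Real.log 77 - Real.log 23 + Real.arsinh (1771/2700*(r/m)))/r := by
          rw [e1, e2, e3, e4, eX, eY, Real.arsinh_neg,
            Real.log_mul (by norm_num) hr.ne', Real.log_mul (by norm_num) hr.ne',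
            Real.log_mul (by norm_num) hr.ne', Real.log_mul (by norm_num) hr.ne',
            Real.log_div (by norm_num) (by norm_num), Real.log_div (by norm_num) (by norm_num),
            Real.log_div (by norm_num) (by norm_num), Real.log_div (by norm_num) (by norm_num)]
          field_simp
          ring
      _ ≤ (π/2 + (Real.log r - Real.log m))/r := by
          apply div_le_div_of_nonneg_right _ hr.le
          rw [hlog77, hlogw] at hnum
          linarith
  · -- CASE B : m/r ≥ 2/5
    set c := Real.sqrt (m*r) with hcdef
    have hc : 0 < c := by rw [hcdef]; positivity
    have hc2 : c^2 = m*r := by rw [hcdef]; exact Real.sq_sqrt (by positivity)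
    clear_value c
    have hdenB : ∀ t:ℝ, 0 < t → 0 < (t^2-r^2)^2+4*c^2*t^2 := by
      intro t ht
      have := mul_pos (mul_pos (by norm_num : (0:ℝ) < 4) (pow_pos hc 2)) (pow_pos ht 2)
      nlinarith [sq_nonneg (t^2-r^2)]
    have hb4 : ∀ t ∈ Set.Ioi (0:ℝ), f t ≤ (t^2+r^2)/((t^2-r^2)^2+4*c^2*t^2) := by
      intro t ht
      simp only [Set.mem_Ioi] at ht
      have hE := hdenB t ht
      have hQ := hQpos t ht
      have hsq : ((t^2-r^2)^2+4*c^2*t^2)^2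
          ≤ (Real.sqrt ((t^2-r^2)^2+4*m^2*t^2) * (t^2+r^2))^2 := by
        rw [mul_pow, Real.sq_sqrt (hDpos t ht).le]
        have hc2' : (4:ℝ)*c^2*t^2 = 4*(m*r)*t^2 := by rw [hc2]
        rw [hc2']
        nlinarith [sq_nonneg (t*(t^2-r^2)*(m-r))]
      have hEle : (t^2-r^2)^2+4*c^2*t^2
          ≤ Real.sqrt ((t^2-r^2)^2+4*m^2*t^2) * (t^2+r^2) := by
        have h10 := Real.sqrt_le_sqrt hsq
        rwa [Real.sqrt_sq hE.le, Real.sqrt_sq (by positivity)] at h10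
      rw [hfb, inv_eq_one_div, div_le_div_iff₀ hQ hE]
      nlinarith [hEle]
    have hnnB : ∀ x ∈ Set.Ioi r, 0 ≤ (x^2+r^2)/((x^2-r^2)^2+4*c^2*x^2) := by
      intro x hx
      positivity
    have harct1 : ∀ x ∈ Set.Ici r,
        HasDerivAt (fun t => Real.arctan ((t^2-r^2)/(2*c*t)) / (2*c))
          ((x^2+r^2)/((x^2-r^2)^2+4*c^2*x^2)) x := by
      intro x hx
      simp only [Set.mem_Ici] at hx
      exact hasDeriv_arctan1 hc (lt_of_lt_of_le hr hx)
    have hIB2 : ∫ t in Set.Ioi r, (t^2+r^2)/((t^2-r^2)^2+4*c^2*t^2) = π/(4*c) := by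
      have heval := integral_Ioi_of_hasDerivAt_of_nonneg' harct1 hnnB (tendsto_arctan1 hc)
      rw [heval]
      norm_num
    have hBint2 : IntegrableOn (fun t:ℝ => (t^2+r^2)/((t^2-r^2)^2+4*c^2*t^2)) (Set.Ioi r) :=
      integrableOn_Ioi_deriv_of_nonneg' harct1 hnnB (tendsto_arctan1 hc)
    have hIB1 : ∫ t in Set.Ioc 0 r, (t^2+r^2)/((t^2-r^2)^2+4*c^2*t^2) = π/(4*c) :=
      int_Ioc_arctan hr hc
    have hcontB : ContinuousOn (fun t:ℝ => (t^2+r^2)/((t^2-r^2)^2+4*c^2*t^2)) (Set.Icc 0 r) := by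
      apply ContinuousOn.div (by fun_prop) (by fun_prop)
      intro x hx
      have hp : 0 < (x^2-r^2)^2+4*c^2*x^2 := by
        rcases eq_or_lt_of_le hx.1 with h0 | h0
        · rw [← h0]; norm_num; positivity
        · exact hdenB x h0
      exact hp.ne'
    have hBint1 : IntegrableOn (fun t:ℝ => (t^2+r^2)/((t^2-r^2)^2+4*c^2*t^2)) (Set.Ioc 0 r) :=
      hcontB.integrableOn_Icc.mono_set Set.Ioc_subset_Icc_self
    have hf1int : IntegrableOn f (Set.Ioc 0 r) :=
      (hfcont.continuousOn).integrableOn_Icc.mono_set Set.Ioc_subset_Icc_self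
    have hf2int : IntegrableOn f (Set.Ioi r) := by
      apply Integrable.mono hBint2 (hfcont.aestronglyMeasurable.restrict)
      apply (ae_restrict_iff' measurableSet_Ioi).2
      apply ae_of_all
      intro x hx
      simp only [Set.mem_Ioi] at hx
      have hx0 : 0 < x := lt_trans hr hx
      rw [Real.norm_eq_abs, Real.norm_eq_abs, abs_of_nonneg (hfnn x),
        abs_of_nonneg (hnnB x hx)]
      exact hb4 x hx0
    have hsplit : ∫ t in Set.Ioi (0:ℝ), f t
        = (∫ t in Set.Ioc 0 r, f t) + (∫ t in Set.Ioi r, f t) := by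
      have hu2 : Set.Ioc 0 r ∪ Set.Ioi r = Set.Ioi 0 := Set.Ioc_union_Ioi_eq_Ioi hr.le
      have hd2 : Disjoint (Set.Ioc 0 r) (Set.Ioi r) := by
        rw [Set.disjoint_left]
        rintro x ⟨_, hx2⟩ hx3
        exact absurd hx3 (by simp; exact hx2)
      rw [← hu2, setIntegral_union hd2 measurableSet_Ioi hf1int hf2int]
    have hm1 : (∫ t in Set.Ioc 0 r, f t)
        ≤ ∫ t in Set.Ioc 0 r, (t^2+r^2)/((t^2-r^2)^2+4*c^2*t^2) := by
      apply setIntegral_mono_on hf1int hBint1 measurableSet_Ioc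
      intro x hx
      exact hb4 x hx.1
    have hm2 : (∫ t in Set.Ioi r, f t)
        ≤ ∫ t in Set.Ioi r, (t^2+r^2)/((t^2-r^2)^2+4*c^2*t^2) := by
      apply setIntegral_mono_on hf2int hBint2 measurableSet_Ioi
      intro x hx
      simp only [Set.mem_Ioi] at hx
      exact hb4 x (lt_trans hr hx)
    -- numeric endgame
    set u := Real.sqrt (r/m) with hudef
    have hu1 : 1 ≤ u := by
      rw [hudef, show (1:ℝ) = Real.sqrt 1 by rw [Real.sqrt_one]]
      exact Real.sqrt_le_sqrt ((one_le_div hm).2 hmr)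
    have hu0 : 0 < u := lt_of_lt_of_le one_pos hu1
    have huU : u ≤ 1.5812 := by
      rw [hudef]
      have h11 : r/m ≤ 5/2 := by
        rw [div_le_iff₀ hm]
        linarith
      have h12 : Real.sqrt (r/m) ≤ Real.sqrt ((1.5812:ℝ)^2) :=
        Real.sqrt_le_sqrt (by nlinarith)
      rwa [Real.sqrt_sq (by norm_num)] at h12
    have hcu : c*u = r := by
      rw [hudef, hcdef, ← Real.sqrt_mul (by positivity)]
      have h13 : m*r*(r/m) = r^2 := by
        field_simp
      rw [h13, Real.sqrt_sq hr.le]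
    have hlogu : 2*Real.log u = Real.log r - Real.log m := by
      rw [hudef, Real.log_sqrt (by positivity), Real.log_div hr.ne' hm.ne']
      ring
    have hnumB := num_B hu1 huU
    rw [hlogu] at hnumB
    have hpc : π/(2*c) = (π/2*u)/r := by
      rw [← hcu]
      field_simp
    calc ∫ t in Set.Ioi (0:ℝ), f t
        = (∫ t in Set.Ioc 0 r, f t) + (∫ t in Set.Ioi r, f t) := hsplit
      _ ≤ (∫ t in Set.Ioc 0 r, (t^2+r^2)/((t^2-r^2)^2+4*c^2*t^2))
            + (∫ t in Set.Ioi r, (t^2+r^2)/((t^2-r^2)^2+4*c^2*t^2)) := add_le_add hm1 hm2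
      _ = π/(4*c) + π/(4*c) := by rw [hIB1, hIB2]
      _ = π/(2*c) := by ring
      _ = (π/2*u)/r := hpc
      _ ≤ (π/2 + (Real.log r - Real.log m))/r :=
          div_le_div_of_nonneg_right (by linarith [hnumB]) hr.le
end

section
/- Let λ₁,…,λₙ be complex numbers with nonzero real parts, and t₁ = √2 · √(Σⱼ|λⱼ|²). Then ∫₀^{t₁} maxⱼ (1/|t² + λⱼ²|²) dt ≤ (π/4) Σⱼ 1/(|λⱼ|² |Re(λⱼ)|). -/
open MeasureTheory Real Filter Set Topology

lemma D_pos (a b t : ℝ) (ha : 0 < a) :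
    0 < (t^2-(a^2+b^2))^2+4*a^2*t^2 := by
  rcases eq_or_ne t 0 with rfl | ht
  · have h : (0:ℝ)^2 - (a^2+b^2) = -(a^2+b^2) := by ring
    have : 0 < (a^2+b^2)^2 := by positivity
    nlinarith
  · have : 0 < 4*a^2*t^2 := by positivity
    nlinarith [sq_nonneg (t^2-(a^2+b^2))]

lemma arctan_deriv (a b t : ℝ) (ha : 0 < a) (ht : 0 < t) :
    HasDerivAt (fun t => Real.arctan ((t^2 - (a^2+b^2))/(2*a*t)))
      (2*a*(t^2+(a^2+b^2))/((t^2-(a^2+b^2))^2+4*a^2*t^2)) t := by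
  set s := a^2+b^2 with hs
  have hs0 : 0 < s := by positivity
  have h2at : 2*a*t ≠ 0 := by positivity
  have h1 : HasDerivAt (fun t : ℝ => t^2 - s) (2*t) t := by
    simpa using ((hasDerivAt_pow 2 t).sub_const s)
  have h2 : HasDerivAt (fun t : ℝ => 2*a*t) (2*a) t := by
    simpa using (hasDerivAt_id t).const_mul (2*a)
  have h3 := (h1.div h2 h2at).arctan
  convert h3 using 1
  · rfl
  have hD : 0 < (t^2-s)^2+4*a^2*t^2 := D_pos a b t ha
  simp only [Pi.div_apply]
  field_simp
  ring

lemma log_deriv (a b t : ℝ) (ha : 0 < a) :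
    HasDerivAt (fun t => Real.log ((t-b)^2+a^2) - Real.log ((t+b)^2+a^2))
      (4*b*(t^2-(a^2+b^2))/((t^2-(a^2+b^2))^2+4*a^2*t^2)) t := by
  have hP : (0:ℝ) < (t-b)^2+a^2 := by positivity
  have hQ : (0:ℝ) < (t+b)^2+a^2 := by positivity
  have h1 : HasDerivAt (fun t : ℝ => (t-b)^2+a^2) (2*(t-b)) t := by
    simpa using (((hasDerivAt_id t).sub_const b).pow 2).add_const (a^2)
  have h2 : HasDerivAt (fun t : ℝ => (t+b)^2+a^2) (2*(t+b)) t := by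
    simpa using (((hasDerivAt_id t).add_const b).pow 2).add_const (a^2)
  have h3 := (h1.log hP.ne').sub (h2.log hQ.ne')
  refine h3.congr_deriv ?_
  have hD : 0 < (t^2-(a^2+b^2))^2+4*a^2*t^2 := D_pos a b t ha
  have hPQ : ((t-b)^2+a^2)*((t+b)^2+a^2) = (t^2-(a^2+b^2))^2+4*a^2*t^2 := by ring
  rw [← hPQ]
  field_simp
  ring

lemma g_deriv_ne (a b t : ℝ) (ha : 0 < a) (hb : b ≠ 0) (ht : 0 < t) :
    HasDerivAt (fun t => (1/(4*a*(a^2+b^2))) * Real.arctan ((t^2 - (a^2+b^2))/(2*a*t))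
        - (1/(8*b*(a^2+b^2))) * (Real.log ((t-b)^2+a^2) - Real.log ((t+b)^2+a^2)))
      (1/((t^2-(a^2+b^2))^2+4*a^2*t^2)) t := by
  have h := ((arctan_deriv a b t ha ht).const_mul (1/(4*a*(a^2+b^2)))).sub
    ((log_deriv a b t ha).const_mul (1/(8*b*(a^2+b^2))))
  refine h.congr_deriv ?_
  have hD : 0 < (t^2-(a^2+b^2))^2+4*a^2*t^2 := D_pos a b t ha
  have hs : (0:ℝ) < a^2+b^2 := by positivity
  field_simp
  ring

lemma g_deriv_zero (a t : ℝ) (ha : 0 < a) (ht : 0 < t) :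
    HasDerivAt (fun t => (1/(4*a*(a^2+0^2))) * Real.arctan ((t^2 - (a^2+0^2))/(2*a*t))
        + (1/(2*(a^2+0^2))) * (t/(t^2+a^2)))
      (1/((t^2-(a^2+0^2))^2+4*a^2*t^2)) t := by
  have hq : (0:ℝ) < t^2+a^2 := by positivity
  have h1 : HasDerivAt (fun t : ℝ => t/(t^2+a^2)) ((1*(t^2+a^2)-t*(2*t))/(t^2+a^2)^2) t :=
    (hasDerivAt_id t).div (by simpa using (hasDerivAt_pow 2 t).add_const (a^2)) hq.ne'
  have h := ((arctan_deriv a 0 t ha ht).const_mul (1/(4*a*(a^2+0^2)))).add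
    (h1.const_mul (1/(2*(a^2+0^2))))
  refine h.congr_deriv ?_
  have hD : 0 < (t^2-(a^2+0^2))^2+4*a^2*t^2 := D_pos a 0 t ha
  have hkey : (t^2-(a^2+0^2))^2+4*a^2*t^2 = (t^2+a^2)^2 := by ring
  rw [hkey] at hD ⊢
  field_simp
  ring

lemma arctan_lim_top (a s : ℝ) (ha : 0 < a) :
    Tendsto (fun t => Real.arctan ((t^2 - s)/(2*a*t))) atTop (𝓝 (π/2)) := by
  have hinner : Tendsto (fun t : ℝ => (t^2 - s)/(2*a*t)) atTop atTop := by
    have h1 : Tendsto (fun t : ℝ => (t - s/t)/(2*a)) atTop atTop := by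
      have : Tendsto (fun t : ℝ => t + -(s/t)) atTop atTop :=
        tendsto_id.atTop_add (by simpa using (tendsto_const_nhds (α := ℝ) (x := s)).div_atTop tendsto_id |>.neg)
      simpa [sub_eq_add_neg] using this.atTop_div_const (by positivity : (0:ℝ) < 2*a)
    refine h1.congr' ?_
    filter_upwards [eventually_gt_atTop (0:ℝ)] with t ht
    field_simp
  exact (Real.tendsto_arctan_atTop.mono_right nhdsWithin_le_nhds).comp hinner

lemma arctan_lim_zero (a s : ℝ) (ha : 0 < a) (hs : 0 < s) :
    Tendsto (fun t => Real.arctan ((t^2 - s)/(2*a*t))) (𝓝[>] 0) (𝓝 (-(π/2))) := by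
  have hinner : Tendsto (fun t : ℝ => (t^2 - s)/(2*a*t)) (𝓝[>] 0) atBot := by
    have h1 : Tendsto (fun t : ℝ => t^2 - s) (𝓝[>] 0) (𝓝 (-s)) := by
      have h : Tendsto (fun t : ℝ => t^2 - s) (𝓝 0) (𝓝 ((0:ℝ)^2 - s)) :=
        ((continuous_pow 2).sub continuous_const).tendsto (0:ℝ)
      norm_num at h
      exact h.mono_left nhdsWithin_le_nhds
    have h2 : Tendsto (fun t : ℝ => 2*a*t) (𝓝[>] 0) (𝓝[>] 0) := by
      apply tendsto_nhdsWithin_of_tendsto_nhds_of_eventually_within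
      · have h : Tendsto (fun t : ℝ => 2*a*t) (𝓝 0) (𝓝 (2*a*(0:ℝ))) :=
          (continuous_const.mul continuous_id).tendsto (0:ℝ)
        norm_num at h
        exact h.mono_left nhdsWithin_le_nhds
      · filter_upwards [self_mem_nhdsWithin] with t ht
        exact mul_pos (by positivity : (0:ℝ) < 2*a) ht
    have h3 : Tendsto (fun t : ℝ => (2*a*t)⁻¹) (𝓝[>] 0) atTop :=
      tendsto_inv_nhdsGT_zero.comp h2
    have := h1.neg_mul_atTop (by linarith) h3
    refine this.congr fun t => ?_
    rw [div_eq_mul_inv]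
  exact (Real.tendsto_arctan_atBot.mono_right nhdsWithin_le_nhds).comp hinner

lemma log_lim_top (a b : ℝ) (ha : 0 < a) :
    Tendsto (fun t => Real.log ((t-b)^2+a^2) - Real.log ((t+b)^2+a^2)) atTop (𝓝 0) := by
  have hPQ : Tendsto (fun t : ℝ => ((t-b)^2+a^2)/((t+b)^2+a^2)) atTop (𝓝 1) := by
    have hb : Tendsto (fun t : ℝ => b/t) atTop (𝓝 0) := tendsto_const_nhds.div_atTop tendsto_id
    have haa : Tendsto (fun t : ℝ => a/t) atTop (𝓝 0) := tendsto_const_nhds.div_atTop tendsto_id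
    have hnum : Tendsto (fun t : ℝ => (1-b/t)^2+(a/t)^2) atTop (𝓝 1) := by
      have h : Tendsto (fun t : ℝ => (1-b/t)^2+(a/t)^2) atTop (𝓝 ((1-(0:ℝ))^2+(0:ℝ)^2)) :=
        ((tendsto_const_nhds.sub hb).pow 2).add (haa.pow 2)
      norm_num at h
      exact h
    have hden : Tendsto (fun t : ℝ => (1+b/t)^2+(a/t)^2) atTop (𝓝 1) := by
      have h : Tendsto (fun t : ℝ => (1+b/t)^2+(a/t)^2) atTop (𝓝 ((1+(0:ℝ))^2+(0:ℝ)^2)) :=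
        ((tendsto_const_nhds.add hb).pow 2).add (haa.pow 2)
      norm_num at h
      exact h
    have h := hnum.div hden one_ne_zero
    rw [div_one] at h
    refine h.congr' ?_
    filter_upwards [eventually_gt_atTop (0:ℝ)] with t ht
    have h2 : ((t+b)^2+a^2) ≠ 0 := by positivity
    rw [Pi.div_apply]
    field_simp
  have hlog : Tendsto (fun t : ℝ => Real.log (((t-b)^2+a^2)/((t+b)^2+a^2))) atTop (𝓝 0) := by
    have := (Real.continuousAt_log one_ne_zero).tendsto.comp hPQ
    simpa [Function.comp_def] using this
  refine hlog.congr fun t => ?_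
  rw [Real.log_div (by positivity) (by positivity)]

lemma exists_g (a b : ℝ) (ha : 0 < a) :
    ∃ g : ℝ → ℝ, g 0 = -(π/(8*a*(a^2+b^2))) ∧ ContinuousWithinAt g (Set.Ici 0) 0 ∧
      (∀ t ∈ Set.Ioi (0:ℝ), HasDerivAt g (1/((t^2-(a^2+b^2))^2+4*a^2*t^2)) t) ∧
      Tendsto g atTop (𝓝 (π/(8*a*(a^2+b^2)))) := by
  have hs : (0:ℝ) < a^2+b^2 := by positivity
  rcases eq_or_ne b 0 with rfl | hb
  · -- b = 0
    set φ : ℝ → ℝ := fun t => (1/(4*a*(a^2+0^2))) * Real.arctan ((t^2 - (a^2+0^2))/(2*a*t))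
        + (1/(2*(a^2+0^2))) * (t/(t^2+a^2)) with hφ
    refine ⟨fun t => if t = 0 then -(π/(8*a*(a^2+0^2))) else φ t, by simp, ?_, ?_, ?_⟩
    · rw [show Ici (0:ℝ) = insert 0 (Ioi 0) from Ioi_insert.symm,
        continuousWithinAt_insert_self]
      have h1 := (arctan_lim_zero a (a^2+0^2) ha hs).const_mul (1/(4*a*(a^2+0^2)))
      have h2 : Tendsto (fun t : ℝ => (1/(2*(a^2+0^2))) * (t/(t^2+a^2))) (𝓝[>] 0)
          (𝓝 ((1/(2*(a^2+0^2))) * (0/(0^2+a^2)))) := by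
        apply Tendsto.mono_left _ nhdsWithin_le_nhds
        apply ContinuousAt.tendsto
        fun_prop (disch := positivity)
      have h := h1.add h2
      have hval : 1/(4*a*(a^2+0^2)) * -(π/2) + (1/(2*(a^2+0^2))) * ((0:ℝ)/(0^2+a^2))
          = -(π/(8*a*(a^2+0^2))) := by
        field_simp
        try ring
        try simp
      rw [hval] at h
      have h' := h.congr' (by
        filter_upwards [self_mem_nhdsWithin] with x (hx : 0 < x)
        exact (if_neg hx.ne').symm :
        (fun t : ℝ => (1/(4*a*(a^2+0^2))) * Real.arctan ((t^2 - (a^2+0^2))/(2*a*t))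
          + (1/(2*(a^2+0^2))) * (t/(t^2+a^2)))
          =ᶠ[𝓝[>] (0:ℝ)] fun t => if t = 0 then -(π/(8*a*(a^2+0^2))) else φ t)
      unfold ContinuousWithinAt
      simpa using h'
    · intro t ht
      refine (g_deriv_zero a t ha ht).congr_of_eventuallyEq ?_
      filter_upwards [eventually_ne_nhds ht.ne'] with x hx
      exact if_neg hx
    · have h1 := (arctan_lim_top a (a^2+0^2) ha).const_mul (1/(4*a*(a^2+0^2)))
      have h2 : Tendsto (fun t : ℝ => (1/(2*(a^2+0^2))) * (t/(t^2+a^2))) atTop (𝓝 0) := by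
        have hsq : Tendsto (fun t : ℝ => t/(t^2+a^2)) atTop (𝓝 0) := by
          have hup : Tendsto (fun t : ℝ => t⁻¹) atTop (𝓝 0) := tendsto_inv_atTop_zero
          refine tendsto_of_tendsto_of_tendsto_of_le_of_le' tendsto_const_nhds hup ?_ ?_
          · filter_upwards [eventually_gt_atTop (0:ℝ)] with t ht
            positivity
          · filter_upwards [eventually_gt_atTop (0:ℝ)] with t ht
            rw [div_le_iff₀ (by positivity), inv_mul_eq_div, le_div_iff₀ ht]
            nlinarith
        have h2' := hsq.const_mul (1/(2*(a^2+0^2)))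
        rwa [mul_zero] at h2'
      have h := h1.add h2
      have hval : 1/(4*a*(a^2+0^2)) * (π/2) + 0 = π/(8*a*(a^2+0^2)) := by
        field_simp
        try ring
        try simp
      rw [hval] at h
      refine h.congr' ?_
      filter_upwards [eventually_ne_atTop (0:ℝ)] with x hx
      exact (if_neg hx).symm
  · -- b ≠ 0
    set φ : ℝ → ℝ := fun t => (1/(4*a*(a^2+b^2))) * Real.arctan ((t^2 - (a^2+b^2))/(2*a*t))
        - (1/(8*b*(a^2+b^2))) * (Real.log ((t-b)^2+a^2) - Real.log ((t+b)^2+a^2)) with hφ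
    refine ⟨fun t => if t = 0 then -(π/(8*a*(a^2+b^2))) else φ t, by simp, ?_, ?_, ?_⟩
    · rw [show Ici (0:ℝ) = insert 0 (Ioi 0) from Ioi_insert.symm,
        continuousWithinAt_insert_self]
      have h1 := (arctan_lim_zero a (a^2+b^2) ha hs).const_mul (1/(4*a*(a^2+b^2)))
      have h2 : Tendsto (fun t : ℝ => (1/(8*b*(a^2+b^2))) *
            (Real.log ((t-b)^2+a^2) - Real.log ((t+b)^2+a^2))) (𝓝[>] 0)
          (𝓝 ((1/(8*b*(a^2+b^2))) * (Real.log ((0-b)^2+a^2) - Real.log ((0+b)^2+a^2)))) := by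
        apply Tendsto.mono_left _ nhdsWithin_le_nhds
        apply ContinuousAt.tendsto
        apply ContinuousAt.mul continuousAt_const
        apply ContinuousAt.sub
        · exact (Real.continuousAt_log (by positivity)).comp (by fun_prop)
        · exact (Real.continuousAt_log (by positivity)).comp (by fun_prop)
      have h := h1.sub h2
      have hval : 1/(4*a*(a^2+b^2)) * -(π/2) - (1/(8*b*(a^2+b^2))) *
          (Real.log (((0:ℝ)-b)^2+a^2) - Real.log (((0:ℝ)+b)^2+a^2)) = -(π/(8*a*(a^2+b^2))) := by
        rw [show ((0:ℝ)-b)^2 = ((0:ℝ)+b)^2 by ring, sub_self, mul_zero, sub_zero]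
        field_simp
        try ring
        try simp
      rw [hval] at h
      have h' := h.congr' (by
        filter_upwards [self_mem_nhdsWithin] with x (hx : 0 < x)
        exact (if_neg hx.ne').symm :
        (fun t : ℝ => (1/(4*a*(a^2+b^2))) * Real.arctan ((t^2 - (a^2+b^2))/(2*a*t))
          - (1/(8*b*(a^2+b^2))) * (Real.log ((t-b)^2+a^2) - Real.log ((t+b)^2+a^2)))
          =ᶠ[𝓝[>] (0:ℝ)] fun t => if t = 0 then -(π/(8*a*(a^2+b^2))) else φ t)
      unfold ContinuousWithinAt
      simpa using h'
    · intro t ht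
      refine (g_deriv_ne a b t ha hb ht).congr_of_eventuallyEq ?_
      filter_upwards [eventually_ne_nhds ht.ne'] with x hx
      exact if_neg hx
    · have h1 := (arctan_lim_top a (a^2+b^2) ha).const_mul (1/(4*a*(a^2+b^2)))
      have h2 := (log_lim_top a b ha).const_mul (1/(8*b*(a^2+b^2)))
      have h := h1.sub h2
      have hval : 1/(4*a*(a^2+b^2)) * (π/2) - 1/(8*b*(a^2+b^2)) * 0
          = π/(8*a*(a^2+b^2)) := by
        field_simp
        try ring
        try simp
      rw [hval] at h
      refine h.congr' ?_
      filter_upwards [eventually_ne_atTop (0:ℝ)] with x hx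
      exact (if_neg hx).symm

lemma core (a b T : ℝ) (ha : 0 < a) (hT : 0 ≤ T) :
    ∫ t in (0:ℝ)..T, 1/((t^2-(a^2+b^2))^2+4*a^2*t^2) ≤ π/(4*a*(a^2+b^2)) := by
  obtain ⟨g, hg0, hgc, hgd, hgl⟩ := exists_g a b ha
  have hpos : ∀ t ∈ Ioi (0:ℝ), 0 ≤ 1/((t^2-(a^2+b^2))^2+4*a^2*t^2) := fun t _ => by positivity
  have hint := integrableOn_Ioi_deriv_of_nonneg hgc hgd hpos hgl
  have hval := integral_Ioi_of_hasDerivAt_of_nonneg hgc hgd hpos hgl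
  rw [intervalIntegral.integral_of_le hT]
  have hmono : ∫ t in Ioc (0:ℝ) T, 1/((t^2-(a^2+b^2))^2+4*a^2*t^2)
      ≤ ∫ t in Ioi (0:ℝ), 1/((t^2-(a^2+b^2))^2+4*a^2*t^2) := by
    apply setIntegral_mono_set hint
    · filter_upwards with t using by positivity
    · exact HasSubset.Subset.eventuallyLE Ioc_subset_Ioi_self
  refine hmono.trans ?_
  rw [hval, hg0, sub_neg_eq_add]
  rw [show π/(8*a*(a^2+b^2)) + π/(8*a*(a^2+b^2)) = π/(4*a*(a^2+b^2)) by
    field_simp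
    try ring
    try simp]

lemma absq (t : ℝ) (z : ℂ) :
    ‖(t:ℂ)^2 + z^2‖^2 = (t^2-(|z.re|^2+z.im^2))^2+4*|z.re|^2*t^2 := by
  have h : |z.re|^2 = z.re^2 := sq_abs _
  rw [Complex.sq_norm, Complex.normSq_apply, h]
  have hre : ((t:ℂ)^2+z^2).re = t^2 + (z.re^2 - z.im^2) := by
    simp [pow_two, Complex.mul_re]
  have him : ((t:ℂ)^2+z^2).im = 2*(z.re*z.im) := by
    simp [pow_two, Complex.mul_im]
    ring
  rw [hre, him]
  ring

set_option maxHeartbeats 1000000 in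
theorem integral_sup_le {n : ℕ} (hn : 0 < n) (lam : Fin n → ℂ)
    (hre : ∀ j, (lam j).re ≠ 0) :
    ∫ t in (0 : ℝ)..(Real.sqrt 2 * Real.sqrt (∑ j, ‖lam j‖ ^ 2)),
        ⨆ j, 1 / ‖(t : ℂ) ^ 2 + (lam j) ^ 2‖ ^ 2
      ≤ (π / 4) * ∑ j, 1 / (‖lam j‖ ^ 2 * |(lam j).re|) := by
  have hne : Nonempty (Fin n) := ⟨⟨0, hn⟩⟩
  have hT : 0 ≤ Real.sqrt 2 * Real.sqrt (∑ j, ‖lam j‖ ^ 2) :=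
    mul_nonneg (Real.sqrt_nonneg _) (Real.sqrt_nonneg _)
  set T := Real.sqrt 2 * Real.sqrt (∑ j, ‖lam j‖ ^ 2) with hTdef
  set F : Fin n → ℝ → ℝ := fun j t => 1 / ‖(t:ℂ)^2 + (lam j)^2‖^2 with hF
  have hapos : ∀ j, 0 < |(lam j).re| := fun j => abs_pos.mpr (hre j)
  have hden : ∀ j (t : ℝ), (0:ℝ) < ‖(t:ℂ)^2 + (lam j)^2‖^2 := by
    intro j t
    rw [absq]
    exact D_pos _ _ _ (hapos j)
  have hcont : ∀ j, Continuous (F j) := by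
    intro j
    have hc : Continuous fun t : ℝ => ‖(t:ℂ)^2 + (lam j)^2‖ :=
      continuous_norm.comp (by fun_prop)
    exact continuous_const.div (hc.pow 2) fun t => (hden j t).ne'
  have hint : ∀ j, IntervalIntegrable (F j) volume 0 T := fun j =>
    (hcont j).intervalIntegrable 0 T
  have hcontsum : Continuous (fun t => ∑ j, F j t) :=
    continuous_finset_sum Finset.univ (fun j _ => hcont j)
  have hintsum : IntervalIntegrable (fun t => ∑ j, F j t) volume 0 T :=
    hcontsum.intervalIntegrable 0 T
  have hintsup : IntervalIntegrable (fun t => ⨆ j, F j t) volume 0 T := by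
    apply hintsum.mono_fun
    · apply Measurable.aestronglyMeasurable
      exact Measurable.iSup fun j => (hcont j).measurable
    · filter_upwards with t
      rw [Real.norm_eq_abs, Real.norm_eq_abs]
      have h1 : (0:ℝ) ≤ ⨆ j, F j t := le_ciSup_of_le (Finite.bddAbove (finite_range _)) hne.some (by positivity)
      have h2 : (⨆ j, F j t) ≤ ∑ j, F j t := by
        refine ciSup_le fun j => ?_
        exact Finset.single_le_sum (f := fun j => F j t) (fun i _ => by positivity)
          (Finset.mem_univ j)
      rw [abs_of_nonneg h1, abs_of_nonneg (by positivity : (0:ℝ) ≤ ∑ j, F j t)]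
      exact h2
  have step1 : ∫ t in (0:ℝ)..T, (⨆ j, F j t) ≤ ∫ t in (0:ℝ)..T, ∑ j, F j t := by
    apply intervalIntegral.integral_mono_on hT hintsup hintsum
    intro t _
    refine ciSup_le fun j => ?_
    exact Finset.single_le_sum (f := fun j => F j t) (fun i _ => by positivity)
      (Finset.mem_univ j)
  have step2 : ∫ t in (0:ℝ)..T, ∑ j, F j t = ∑ j, ∫ t in (0:ℝ)..T, F j t :=
    intervalIntegral.integral_finset_sum (fun j _ => hint j)
  have step3 : ∀ j, ∫ t in (0:ℝ)..T, F j t ≤ π/(4 * |(lam j).re| * (|(lam j).re| ^ 2 + (lam j).im ^ 2)) := by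
    intro j
    have : ∫ t in (0:ℝ)..T, F j t
        = ∫ t in (0:ℝ)..T, 1/((t^2-(|(lam j).re| ^ 2 + (lam j).im ^ 2))^2+4 * |(lam j).re| ^ 2*t^2) := by
      apply intervalIntegral.integral_congr
      intro t _
      simp only [hF, absq]
    rw [this]
    exact core _ _ _ (hapos j) hT
  have step4 : ∑ j, π/(4 * |(lam j).re| * (|(lam j).re| ^ 2 + (lam j).im ^ 2))
      = (π / 4) * ∑ j, 1 / (‖lam j‖ ^ 2 * |(lam j).re|) := by
    rw [Finset.mul_sum]
    apply Finset.sum_congr rfl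
    intro j _
    have habs : ‖lam j‖^2 = |(lam j).re| ^ 2 + (lam j).im ^ 2 := by
      rw [Complex.sq_norm, Complex.normSq_apply, sq_abs]
      ring
    rw [habs]
    have h1 := hapos j
    have h2 : (0:ℝ) < |(lam j).re| ^ 2 + (lam j).im ^ 2 := by positivity
    field_simp
  calc ∫ t in (0:ℝ)..T, (⨆ j, F j t) ≤ ∑ j, ∫ t in (0:ℝ)..T, F j t := by rw [← step2]; exact step1
    _ ≤ ∑ j, π/(4 * |(lam j).re| * (|(lam j).re| ^ 2 + (lam j).im ^ 2)) := Finset.sum_le_sum fun j _ => step3 j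
    _ = _ := step4
end
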